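/- arXiv:1411.6982 — 6 statements merged into one kernel-verified Lean document; each statement's English description precedes it below -/
import Mathlib

section
/- Let α, β ∈ (0, 2π) be real numbers such that α, β, π are linearly independent over ℚ. Then for every real x, y and every ε > 0 there exists an integer n such that |e^{inα} − e^{ix}| < ε and |e^{inβ} − e^{iy}| < ε. -/
open Complex Real

namespace KroneckerAux
open Finset

noncomputable def ee (θ : ℝ) : ℂ := Complex.exp (θ * Complex.I)

lemma ee_add (a b : ℝ) : ee (a + b) = ee a * ee b := by
  rw [ee, ee, ee, ← Complex.exp_add]; congr 1; push_cast; ring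

lemma abs_ee (a : ℝ) : ‖ee a‖ = 1 := Complex.norm_exp_ofReal_mul_I a

lemma ee_pow (a : ℝ) (n : ℕ) : ee a ^ n = ee (n * a) := by
  rw [ee, ee, ← Complex.exp_nat_mul]; congr 1; push_cast; ring

lemma ee_zero : ee 0 = 1 := by simp [ee]

lemma ee_merge3 (a b c : ℝ) : ee a * ee b * ee c = ee (a + b + c) := by
  rw [ee_add, ee_add]

lemma geom_bound (w : ℂ) (hw : ‖w‖ = 1) (h1 : w ≠ 1) (N : ℕ) :
    ‖∑ n ∈ range N, w ^ (n + 1)‖ ≤ 2 / ‖w - 1‖ := by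
  have hne : w - 1 ≠ 0 := sub_ne_zero.mpr h1
  have hpos : 0 < ‖w - 1‖ := by
    simpa [norm_pos_iff] using hne
  have h : (∑ n ∈ range N, w ^ (n + 1)) = w * ((w ^ N - 1) / (w - 1)) := by
    rw [← geom_sum_eq h1 N, Finset.mul_sum]
    exact Finset.sum_congr rfl fun n _ => by ring
  rw [h, norm_mul, norm_div, hw, one_mul, div_le_div_iff₀ hpos hpos]
  have h2 : ‖w ^ N - 1‖ ≤ 2 := by
    have := norm_sub_le (w ^ N) (1 : ℂ)
    simp only [norm_pow, hw, one_pow, norm_one] at this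
    linarith
  nlinarith

noncomputable def zf (α β : ℝ) (M : ℕ) (q : ℕ × ℕ) : ℂ :=
  ee (((q.1 : ℝ) - M) * α + ((q.2 : ℝ) - M) * β)

noncomputable def cf (x y : ℝ) (p : ℕ) (q : ℕ × ℕ) : ℂ :=
  (p.choose q.1 : ℂ) * (p.choose q.2 : ℂ) * ee (-((q.1 : ℝ) * x + (q.2 : ℝ) * y))

lemma expand (α β x y : ℝ) (M t : ℕ) :
    ((1 + ee (t * α - x)) * (1 + ee (t * β - y))) ^ (2 * M)
      * ee (-(t : ℝ) * (M * (α + β)))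
    = ∑ q ∈ range (2 * M + 1) ×ˢ range (2 * M + 1),
        cf x y (2 * M) q * zf α β M q ^ t := by
  set p := 2 * M with hp
  rw [Finset.sum_product, mul_pow]
  rw [show (1 + ee (t * α - x)) = (ee (t * α - x) + 1) by ring,
      show (1 + ee (t * β - y)) = (ee (t * β - y) + 1) by ring,
      add_pow, add_pow, Finset.sum_mul_sum, Finset.sum_mul]
  refine Finset.sum_congr rfl fun j hj => ?_
  rw [Finset.sum_mul]
  refine Finset.sum_congr rfl fun k hk => ?_
  calc (ee (↑t * α - x) ^ j * 1 ^ (p - j) * ↑(p.choose j)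
          * (ee (↑t * β - y) ^ k * 1 ^ (p - k) * ↑(p.choose k)))
          * ee (-(t : ℝ) * (M * (α + β)))
      = ((p.choose j : ℂ) * (p.choose k : ℂ))
          * (ee (j * ((t : ℝ) * α - x)) * ee (k * ((t : ℝ) * β - y))
             * ee (-(t : ℝ) * (M * (α + β)))) := by
        rw [ee_pow, ee_pow]; ring
    _ = ((p.choose j : ℂ) * (p.choose k : ℂ))
          * ee (j * ((t : ℝ) * α - x) + k * ((t : ℝ) * β - y)
                + -(t : ℝ) * (M * (α + β))) := by rw [ee_merge3]
    _ = cf x y p (j, k) * zf α β M (j, k) ^ t := by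
        rw [cf, zf, ee_pow]
        simp only []
        rw [mul_assoc, mul_assoc, mul_assoc, ← ee_add]
        congr 2
        push_cast; ring

lemma bohr_main (α β x y : ℝ)
    (hfreq : ∀ a b : ℤ, ee (a * α + b * β) = 1 → a = 0 ∧ b = 0)
    (M : ℕ) (hM1 : 1 ≤ M) (B : ℝ) (hB0 : 0 ≤ B)
    (hMlt : ((2 * M + 1 : ℝ)) ^ 2 * B ^ (2 * M) < 4 ^ (2 * M))
    (hcon : ∀ n : ℕ, ‖(1 + ee ((n + 1 : ℕ) * α - x)) * (1 + ee ((n + 1 : ℕ) * β - y))‖ ≤ B) :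
    False := by
  set p := 2 * M with hp
  set grid := range (p + 1) ×ˢ range (p + 1) with hgrid
  have hmem : (M, M) ∈ grid := by
    simp [hgrid, Finset.mem_product]; omega
  -- z has modulus 1
  have habs_z : ∀ q : ℕ × ℕ, ‖zf α β M q‖ = 1 := fun q => abs_ee _
  -- diagonal z = 1
  have hzdiag : zf α β M (M, M) = 1 := by
    rw [zf]; simp only []
    rw [show ((M : ℝ) - M) * α + ((M : ℝ) - M) * β = 0 by ring, ee_zero]
  -- off-diagonal z ≠ 1
  have hzne : ∀ q ∈ grid, q ≠ (M, M) → zf α β M q ≠ 1 := by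
    intro q hq hqne h1
    have := hfreq ((q.1 : ℤ) - M) ((q.2 : ℤ) - M) (by
      rw [← h1, zf]; congr 1; push_cast; ring)
    apply hqne
    have h1 : q.1 = M := by omega
    have h2 : q.2 = M := by omega
    exact Prod.ext h1 h2
  -- abs of coefficients
  have habs_cf : ∀ q : ℕ × ℕ, ‖cf x y p q‖
      = (p.choose q.1 : ℝ) * (p.choose q.2 : ℝ) := by
    intro q
    rw [cf, norm_mul, norm_mul, abs_ee, mul_one]
    simp
  -- the constant K
  set K : ℝ := ∑ q ∈ grid.erase (M, M),
      (p.choose q.1 : ℝ) * (p.choose q.2 : ℝ) * (2 / ‖zf α β M q - 1‖) with hK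
  have hK0 : 0 ≤ K := by
    apply Finset.sum_nonneg
    intro q hq
    have : 0 ≤ ‖zf α β M q - 1‖ := norm_nonneg _
    positivity
  -- main estimate for every N
  have hmain : ∀ N : ℕ, (N : ℝ) * ((p.choose M : ℝ) * (p.choose M : ℝ)) ≤ (N : ℝ) * B ^ p + K := by
    intro N
    -- S N
    set S : ℂ := ∑ n ∈ range N,
        ((1 + ee ((n + 1 : ℕ) * α - x)) * (1 + ee ((n + 1 : ℕ) * β - y))) ^ p
          * ee (-((n + 1 : ℕ) : ℝ) * (M * (α + β))) with hS
    have hS1 : S = ∑ q ∈ grid, cf x y p q * ∑ n ∈ range N, zf α β M q ^ (n + 1) := by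
      rw [hS]
      rw [Finset.sum_congr rfl (fun n _ => expand α β x y M (n + 1))]
      rw [Finset.sum_comm]
      exact Finset.sum_congr rfl fun q _ => by rw [Finset.mul_sum]
    -- |S| ≤ N * B^p
    have hSle : ‖S‖ ≤ (N : ℝ) * B ^ p := by
      rw [hS]
      calc ‖∑ n ∈ range N, _‖ ≤ ∑ n ∈ range N,
          ‖((1 + ee ((n + 1 : ℕ) * α - x)) * (1 + ee ((n + 1 : ℕ) * β - y))) ^ p
            * ee (-((n + 1 : ℕ) : ℝ) * (M * (α + β)))‖ := by
            exact norm_sum_le _ _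
        _ ≤ ∑ _n ∈ range N, B ^ p := by
            apply Finset.sum_le_sum
            intro n _
            rw [norm_mul, abs_ee, mul_one, norm_pow]
            exact pow_le_pow_left₀ (norm_nonneg _) (hcon n) p
        _ = (N : ℝ) * B ^ p := by rw [Finset.sum_const, Finset.card_range, nsmul_eq_mul]
    -- split the diagonal
    have hsplit : S = cf x y p (M, M) * N + ∑ q ∈ grid.erase (M, M),
        cf x y p q * ∑ n ∈ range N, zf α β M q ^ (n + 1) := by
      rw [hS1, ← Finset.add_sum_erase _ _ hmem]
      congr 1
      rw [hzdiag]
      simp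
    -- bound error sum
    have herr : ‖∑ q ∈ grid.erase (M, M),
        cf x y p q * ∑ n ∈ range N, zf α β M q ^ (n + 1)‖ ≤ K := by
      calc ‖_‖ ≤ ∑ q ∈ grid.erase (M, M),
            ‖cf x y p q * ∑ n ∈ range N, zf α β M q ^ (n + 1)‖ :=
          norm_sum_le _ _
        _ ≤ K := by
          rw [hK]
          apply Finset.sum_le_sum
          intro q hq
          rw [norm_mul, habs_cf]
          apply mul_le_mul_of_nonneg_left
          · exact geom_bound _ (habs_z q) (hzne q (Finset.mem_of_mem_erase hq)
              (Finset.ne_of_mem_erase hq)) N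
          · positivity
    -- |cf (M,M) * N| = N * C^2
    have hdiagabs : ‖cf x y p (M, M) * N‖
        = (N : ℝ) * ((p.choose M : ℝ) * (p.choose M : ℝ)) := by
      rw [norm_mul, habs_cf]
      simp [mul_comm]
    calc (N : ℝ) * ((p.choose M : ℝ) * (p.choose M : ℝ))
        = ‖cf x y p (M, M) * N‖ := hdiagabs.symm
      _ ≤ ‖S‖ + ‖∑ q ∈ grid.erase (M, M),
            cf x y p q * ∑ n ∈ range N, zf α β M q ^ (n + 1)‖ := by
          rw [hsplit]
          simpa using norm_le_add_norm_add (cf x y p (M, M) * (N : ℂ))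
            (∑ q ∈ grid.erase (M, M), cf x y p q * ∑ n ∈ range N, zf α β M q ^ (n + 1))
      _ ≤ (N : ℝ) * B ^ p + K := add_le_add hSle herr
  -- 4^p ≤ (p+1)^2 * C^2
  have hchoose : (4 : ℝ) ^ p ≤ ((p : ℝ) + 1) ^ 2 * ((p.choose M : ℝ) * (p.choose M : ℝ)) := by
    have h1 : (2 : ℕ) ^ p ≤ (p + 1) * p.choose M := by
      calc (2 : ℕ) ^ p = ∑ j ∈ range (p + 1), p.choose j := (Nat.sum_range_choose p).symm
        _ ≤ ∑ _j ∈ range (p + 1), p.choose M := by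
            apply Finset.sum_le_sum
            intro j _
            have := Nat.choose_le_middle j p
            rwa [show p / 2 = M by omega] at this
        _ = (p + 1) * p.choose M := by rw [Finset.sum_const, Finset.card_range, smul_eq_mul]
    have h2 : (((2 : ℕ) ^ p : ℕ) : ℝ) ≤ ((p : ℝ) + 1) * (p.choose M : ℝ) := by exact_mod_cast h1
    have h3 : (0 : ℝ) ≤ (((2 : ℕ) ^ p : ℕ) : ℝ) := by positivity
    nlinarith [h2, h3, (Nat.cast_nonneg (p.choose M) : (0:ℝ) ≤ _), (Nat.cast_nonneg p : (0:ℝ) ≤ _),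
      sq_nonneg (((p : ℝ) + 1) * (p.choose M : ℝ) - (((2 : ℕ) ^ p : ℕ) : ℝ)),
      show ((((2:ℕ)^p : ℕ)) : ℝ) * (((2:ℕ)^p : ℕ) : ℝ) = 4 ^ p by push_cast; rw [← mul_pow]; norm_num]
  -- derive contradiction
  have hgap : 0 < (4 : ℝ) ^ p - ((p : ℝ) + 1) ^ 2 * B ^ p := by
    have hpe : ((p : ℝ) + 1) = 2 * M + 1 := by rw [hp]; push_cast; ring
    rw [hpe]; linarith [hMlt]
  obtain ⟨N, hN⟩ := exists_nat_gt ((((p : ℝ) + 1) ^ 2 * K) / ((4 : ℝ) ^ p - ((p : ℝ) + 1) ^ 2 * B ^ p))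
  have hNineq := hmain N
  have hp1pos : (0 : ℝ) < ((p : ℝ) + 1) ^ 2 := by positivity
  have key : (N : ℝ) * ((4 : ℝ) ^ p - ((p : ℝ) + 1) ^ 2 * B ^ p) ≤ ((p : ℝ) + 1) ^ 2 * K := by
    nlinarith [hNineq, hchoose, (Nat.cast_nonneg N : (0:ℝ) ≤ _)]
  rw [div_lt_iff₀ hgap] at hN
  nlinarith [key, hN]

lemma bohr_key (α β x y : ℝ)
    (hfreq : ∀ a b : ℤ, ee (a * α + b * β) = 1 → a = 0 ∧ b = 0)
    (δ : ℝ) (hδ : 0 < δ) (hδ1 : δ ≤ 1) :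
    ∃ n : ℕ, 4 - δ <
      ‖(1 + ee ((n + 1 : ℕ) * α - x)) * (1 + ee ((n + 1 : ℕ) * β - y))‖ := by
  by_contra hcon
  push_neg at hcon
  set B : ℝ := 4 - δ with hB
  have hB0 : 0 ≤ B := by simp [hB]; linarith
  have hB4 : B < 4 := by simp [hB]; linarith
  -- choose M ≥ 1 with (2M+1)^2 * B^(2M) < 4^(2M)
  obtain ⟨M, hM1, hMlt⟩ : ∃ M : ℕ, 1 ≤ M ∧ ((2 * M + 1 : ℝ)) ^ 2 * B ^ (2 * M) < 4 ^ (2 * M) := by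
    have hr0 : 0 ≤ B / 4 := by positivity
    have hr1 : B / 4 < 1 := by linarith
    have t1 : Filter.Tendsto (fun n : ℕ => (n : ℝ) ^ 2 * (B / 4) ^ n) Filter.atTop (nhds 0) :=
      tendsto_pow_const_mul_const_pow_of_lt_one 2 hr0 hr1
    have t2 : Filter.Tendsto (fun M : ℕ => ((2 * M + 1 : ℕ) : ℝ) ^ 2 * (B / 4) ^ (2 * M + 1)) Filter.atTop (nhds 0) :=
      t1.comp (Filter.tendsto_atTop_atTop_of_monotone (fun a b hab => by omega)
        (fun b => ⟨b, by omega⟩))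
    have hB3 : 3 ≤ B := by simp [hB]; linarith
    have hc0 : 0 < B / 4 := by linarith
    have hev : ∀ᶠ M : ℕ in Filter.atTop,
        ((2 * M + 1 : ℕ) : ℝ) ^ 2 * (B / 4) ^ (2 * M + 1) < B / 4 :=
      t2.eventually (Filter.Tendsto.eventually_lt_const hc0 Filter.tendsto_id |>.mono (fun _ h => h)) |>.mono (fun _ h => h)
    obtain ⟨N₀, hN₀⟩ := hev.exists_forall_of_atTop
    refine ⟨max N₀ 1, le_max_right _ _, ?_⟩
    have h1 := hN₀ (max N₀ 1) (le_max_left _ _)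
    have hc : ((2 * (max N₀ 1) + 1 : ℕ) : ℝ) ^ 2 * (B / 4) ^ (2 * (max N₀ 1)) < 1 := by
      rw [pow_succ (B / 4)] at h1
      have := (mul_lt_mul_iff_of_pos_right hc0).mp (by linarith [h1] : (((2 * (max N₀ 1) + 1 : ℕ) : ℝ) ^ 2 * (B / 4) ^ (2 * (max N₀ 1))) * (B / 4) < 1 * (B / 4))
      linarith
    have h4 : (0:ℝ) < 4 ^ (2 * (max N₀ 1)) := by positivity
    have := (mul_lt_mul_iff_of_pos_right h4).mpr hc
    rw [one_mul] at this
    calc ((2 * (max N₀ 1) + 1 : ℝ)) ^ 2 * B ^ (2 * (max N₀ 1))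
        = ((2 * (max N₀ 1) + 1 : ℕ) : ℝ) ^ 2 * (B / 4) ^ (2 * (max N₀ 1)) * 4 ^ (2 * (max N₀ 1)) := by
          rw [div_pow]; push_cast; field_simp
      _ < 4 ^ (2 * (max N₀ 1)) := this
  exact bohr_main α β x y hfreq M hM1 B hB0 hMlt hcon

lemma freq_of_indep (α β : ℝ) (hind : LinearIndependent ℚ ![α, β, π]) :
    ∀ a b : ℤ, ee (a * α + b * β) = 1 → a = 0 ∧ b = 0 := by
  intro a b h
  rw [ee, Complex.exp_eq_one_iff] at h
  obtain ⟨k, hk⟩ := h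
  have hI : (Complex.I : ℂ) ≠ 0 := Complex.I_ne_zero
  have h2 : ((a * α + b * β : ℝ) : ℂ) = (k : ℂ) * (2 * π) := by
    have : ((a * α + b * β : ℝ) : ℂ) * Complex.I = ((k : ℂ) * (2 * π)) * Complex.I := by
      rw [hk]; ring
    exact mul_right_cancel₀ hI this
  have h3 : (a : ℝ) * α + b * β = k * (2 * π) := by exact_mod_cast h2
  have h4 : (a : ℝ) * α + b * β + (-2 * k) * π = 0 := by rw [h3]; ring
  have := Fintype.linearIndependent_iff.mp hind ![(a : ℚ), (b : ℚ), ((-2 * k : ℤ) : ℚ)] ?_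
  · constructor
    · have := this 0
      simpa using this
    · have := this 1
      simpa using this
  · have : ∀ i : Fin 3, (![(a : ℚ), (b : ℚ), ((-2 * k : ℤ) : ℚ)] i) • (![α, β, π] i)
        = ![(a : ℝ) * α, (b : ℝ) * β, ((-2 * k : ℝ)) * π] i := by
      intro i
      fin_cases i <;> simp [Rat.smul_def] <;> push_cast <;> ring
    rw [Fin.sum_univ_three]
    rw [this 0, this 1, this 2]
    simp only [Matrix.cons_val_zero, Matrix.cons_val_one, Matrix.head_cons,
      Matrix.cons_val_two, Matrix.tail_cons]
    linarith [h4]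

lemma parallelogram (z : ℂ) (hz : ‖z‖ = 1) :
    ‖z - 1‖ ^ 2 + ‖1 + z‖ ^ 2 = 4 := by
  have h1 : z.re * z.re + z.im * z.im = 1 := by
    have := Complex.sq_norm z
    rw [hz] at this
    simpa [Complex.normSq_apply] using this.symm
  rw [Complex.sq_norm, Complex.sq_norm]
  simp only [Complex.normSq_apply, Complex.sub_re, Complex.sub_im, Complex.add_re,
    Complex.add_im, Complex.one_re, Complex.one_im]
  linear_combination 2 * h1

end KroneckerAux

open KroneckerAux in
/-- Kronecker's approximation theorem for two frequencies. -/
theorem kronecker_two_frequencies (α β : ℝ)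
    (hα : α ∈ Set.Ioo (0 : ℝ) (2 * π)) (hβ : β ∈ Set.Ioo (0 : ℝ) (2 * π))
    (hind : LinearIndependent ℚ ![α, β, π])
    (x y : ℝ) (ε : ℝ) (hε : 0 < ε) :
    ∃ n : ℤ,
      ‖Complex.exp ((n : ℂ) * (α : ℂ) * Complex.I) - Complex.exp ((x : ℂ) * Complex.I)‖ < ε ∧
      ‖Complex.exp ((n : ℂ) * (β : ℂ) * Complex.I) - Complex.exp ((y : ℂ) * Complex.I)‖ < ε := by
  set δ : ℝ := min 1 (ε ^ 2 / 4) with hδdef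
  have hδ : 0 < δ := lt_min one_pos (by positivity)
  have hδ1 : δ ≤ 1 := min_le_left _ _
  have hδε : δ ≤ ε ^ 2 / 4 := min_le_right _ _
  obtain ⟨n, hn⟩ := bohr_key α β x y (freq_of_indep α β hind) δ hδ hδ1
  set t : ℕ := n + 1 with htdef
  set u : ℂ := ee ((t : ℝ) * α - x) with hu
  set v : ℂ := ee ((t : ℝ) * β - y) with hv
  have hau : ‖u‖ = 1 := abs_ee _
  have hav : ‖v‖ = 1 := abs_ee _
  have h2u : ‖1 + u‖ ≤ 2 := by
    calc ‖1 + u‖ ≤ ‖1‖ + ‖u‖ := norm_add_le _ _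
      _ = 2 := by rw [hau]; simp; norm_num
  have h2v : ‖1 + v‖ ≤ 2 := by
    calc ‖1 + v‖ ≤ ‖1‖ + ‖v‖ := norm_add_le _ _
      _ = 2 := by rw [hav]; simp; norm_num
  have hnn_u : 0 ≤ ‖1 + u‖ := norm_nonneg _
  have hnn_v : 0 ≤ ‖1 + v‖ := norm_nonneg _
  rw [norm_mul] at hn
  have hgu : 2 - δ / 2 ≤ ‖1 + u‖ := by nlinarith
  have hgv : 2 - δ / 2 ≤ ‖1 + v‖ := by nlinarith
  -- distances
  have hdu : ‖u - 1‖ < ε := by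
    have hpar := parallelogram u hau
    have : ‖u - 1‖ ^ 2 < ε ^ 2 := by nlinarith
    exact lt_of_pow_lt_pow_left₀ 2 (le_of_lt hε) this
  have hdv : ‖v - 1‖ < ε := by
    have hpar := parallelogram v hav
    have : ‖v - 1‖ ^ 2 < ε ^ 2 := by nlinarith
    exact lt_of_pow_lt_pow_left₀ 2 (le_of_lt hε) this
  refine ⟨(t : ℤ), ?_, ?_⟩
  · have he1 : Complex.exp (((t : ℤ) : ℂ) * (α : ℂ) * Complex.I) = ee ((t : ℝ) * α) := by
      rw [ee]; congr 1; push_cast; ring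
    have he2 : Complex.exp ((x : ℂ) * Complex.I) = ee x := rfl
    rw [he1, he2]
    have h3 : ee ((t : ℝ) * α) = ee x * u := by
      rw [hu, ← ee_add]; congr 1; ring
    rw [h3, show ee x * u - ee x = ee x * (u - 1) by ring, norm_mul, abs_ee, one_mul]
    exact hdu
  · have he1 : Complex.exp (((t : ℤ) : ℂ) * (β : ℂ) * Complex.I) = ee ((t : ℝ) * β) := by
      rw [ee]; congr 1; push_cast; ring
    have he2 : Complex.exp ((y : ℂ) * Complex.I) = ee y := rfl
    rw [he1, he2]
    have h3 : ee ((t : ℝ) * β) = ee y * v := by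
      rw [hv, ← ee_add]; congr 1; ring
    rw [h3, show ee y * v - ee y = ee y * (v - 1) by ring, norm_mul, abs_ee, one_mul]
    exact hdv
end

section
/- Let α, β, π be linearly independent over ℚ. Then the closure of the set {(e^{inα}, e^{inβ}) : n ∈ ℤ} in ℂ × ℂ equals the full torus {z ∈ ℂ : |z| = 1} × {u ∈ ℂ : |u| = 1}. -/
open Complex Real

namespace KroneckerAux
open Complex Real Set MeasureTheory

noncomputable def chi (m n : ℤ) : (Circle × Circle) →* ℂ :=
  Circle.coeHom.comp (((zpowGroupHom m).comp (MonoidHom.fst Circle Circle)) *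
    ((zpowGroupHom n).comp (MonoidHom.snd Circle Circle)))

lemma chi_apply (m n : ℤ) (p : Circle × Circle) :
    chi m n p = ((p.1 ^ m * p.2 ^ n : Circle) : ℂ) := rfl

lemma continuous_chi (m n : ℤ) : Continuous (chi m n) := by
  have h : Continuous fun p : Circle × Circle => (p.1 ^ m * p.2 ^ n : Circle) :=
    (((continuous_zpow m).comp continuous_fst).mul ((continuous_zpow n).comp continuous_snd))
  exact h.subtype_val

/-- Characters as continuous maps. -/
noncomputable def chiC (m n : ℤ) : C(Circle × Circle, ℂ) := ⟨chi m n, continuous_chi m n⟩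

lemma chiC_mul (m n m' n' : ℤ) : chiC m n * chiC m' n' = chiC (m + m') (n + n') := by
  ext p
  simp only [chiC, ContinuousMap.mul_apply, ContinuousMap.coe_mk, chi_apply, zpow_add,
    ← Circle.coe_mul]
  congr 1
  exact mul_mul_mul_comm _ _ _ _

lemma chiC_zero : chiC 0 0 = 1 := by
  ext p; simp [chiC, chi_apply]

lemma star_chiC (m n : ℤ) : star (chiC m n) = chiC (-m) (-n) := by
  ext p
  simp only [ContinuousMap.star_apply, chiC, ContinuousMap.coe_mk, chi_apply]
  rw [Complex.star_def, ← Circle.coe_inv_eq_conj]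
  push_cast [mul_inv, ← zpow_neg]
  ring

open scoped ComplexConjugate
open Submodule in
/-- The star subalgebra generated by the characters. -/
noncomputable def chiAlg : StarSubalgebra ℂ C(Circle × Circle, ℂ) where
  toSubalgebra := Algebra.adjoin ℂ (range fun mn : ℤ × ℤ => chiC mn.1 mn.2)
  star_mem' := by
    show Algebra.adjoin ℂ _ ≤ star (Algebra.adjoin ℂ _)
    refine Algebra.adjoin_le ?_
    rintro - ⟨⟨m, n⟩, rfl⟩
    refine Algebra.subset_adjoin ⟨(-m, -n), ?_⟩
    simp [← star_chiC]

lemma chiAlg_separatesPoints : (chiAlg).SeparatesPoints := by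
  intro p q hpq
  by_cases h1 : p.1 = q.1
  · have h2 : p.2 ≠ q.2 := fun h2 => hpq (Prod.ext h1 h2)
    refine ⟨_, ⟨chiC 0 1, Algebra.subset_adjoin ⟨(0,1), rfl⟩, rfl⟩, ?_⟩
    simp only [chiC, ContinuousMap.coe_mk, chi_apply, zpow_zero, zpow_one, one_mul]
    exact fun hc => h2 (Subtype.ext hc)
  · refine ⟨_, ⟨chiC 1 0, Algebra.subset_adjoin ⟨(1,0), rfl⟩, rfl⟩, ?_⟩
    simp only [chiC, ContinuousMap.coe_mk, chi_apply, zpow_zero, zpow_one, mul_one]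
    exact fun hc => h1 (Subtype.ext hc)

lemma chiAlg_closure_eq_top : (chiAlg).topologicalClosure = ⊤ :=
  ContinuousMap.starSubalgebra_topologicalClosure_eq_top_of_separatesPoints _
    chiAlg_separatesPoints

open Submodule in
lemma span_chi_dense :
    Dense ((Submodule.span ℂ (range fun mn : ℤ × ℤ => chiC mn.1 mn.2) : Submodule ℂ _) : Set C(Circle × Circle, ℂ)) := by
  have hcoe : Subalgebra.toSubmodule (chiAlg).toSubalgebra
      = Submodule.span ℂ (range fun mn : ℤ × ℤ => chiC mn.1 mn.2) := by
    apply Algebra.adjoin_eq_span_of_subset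
    refine Subset.trans ?_ Submodule.subset_span
    intro x hx
    refine Submonoid.closure_induction (fun _ => id) ⟨(0,0), chiC_zero⟩ ?_ hx
    rintro - - - - ⟨⟨m, n⟩, rfl⟩ ⟨⟨m', n'⟩, rfl⟩
    exact ⟨(m + m', n + n'), (chiC_mul m n m' n').symm⟩
  have hset : (Submodule.span ℂ (range fun mn : ℤ × ℤ => chiC mn.1 mn.2) : Set C(Circle × Circle, ℂ))
      = (chiAlg : Set C(Circle × Circle, ℂ)) := by
    rw [← hcoe]; rfl
  rw [hset, dense_iff_closure_eq]
  have h2 := congrArg (fun A : StarSubalgebra ℂ C(Circle × Circle, ℂ) =>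
    (A : Set C(Circle × Circle, ℂ))) chiAlg_closure_eq_top
  simp [StarSubalgebra.topologicalClosure] at h2
  exact h2


lemma exp_zpow (t : ℝ) (m : ℤ) : Circle.exp t ^ m = Circle.exp (m * t) := by
  have h := map_zsmul Circle.expHom m t
  have h2 : Circle.expHom (m • t) = Additive.ofMul (Circle.exp (m * t)) := by
    show Additive.ofMul (Circle.exp (m • t)) = _
    rw [zsmul_eq_mul]
  rw [h2] at h
  have := congrArg Additive.toMul h
  simpa using this.symm

lemma lin_indep_consequence {α β : ℝ} (hind : LinearIndependent ℚ ![α, β, π])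
    {m n j : ℤ} (h : (m : ℝ) * α + n * β = j * (2 * π)) : m = 0 ∧ n = 0 := by
  have hli := Fintype.linearIndependent_iff.1 hind ![(m : ℚ), (n : ℚ), -(2 * j : ℚ)]
  have hsum : ∑ i, (![(m : ℚ), (n : ℚ), -(2 * j : ℚ)]) i • (![α, β, π]) i = 0 := by
    simp only [Fin.sum_univ_three, Matrix.cons_val_zero, Matrix.cons_val_one, Matrix.head_cons,
      Matrix.cons_val_two, Matrix.tail_cons]
    push_cast [Rat.smul_def]
    nlinarith [h]
  have h0 := hli hsum 0
  have h1 := hli hsum 1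
  simp only [Matrix.cons_val_zero, Matrix.cons_val_one, Matrix.head_cons] at h0 h1
  exact ⟨by exact_mod_cast h0, by exact_mod_cast h1⟩

lemma chi_g_ne_one {α β : ℝ} (hind : LinearIndependent ℚ ![α, β, π]) {m n : ℤ}
    (h : ¬(m = 0 ∧ n = 0)) :
    chi m n (Circle.exp α, Circle.exp β) ≠ 1 := by
  intro hc
  have h1 : (Circle.exp α) ^ m * (Circle.exp β) ^ n = 1 := by
    rw [chi_apply] at hc
    exact Subtype.ext hc
  rw [exp_zpow, exp_zpow, ← Circle.exp_add, Circle.exp_eq_one] at h1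
  obtain ⟨j, hj⟩ := h1
  exact h (lin_indep_consequence hind hj)

theorem closure_zpowers_eq_univ {α β : ℝ} (hind : LinearIndependent ℚ ![α, β, π]) :
    ((((Subgroup.zpowers ((Circle.exp α, Circle.exp β) : Circle × Circle))).topologicalClosure
      : Subgroup (Circle × Circle)) : Set (Circle × Circle)) = Set.univ := by
  set g : Circle × Circle := (Circle.exp α, Circle.exp β) with hg
  set K : Subgroup (Circle × Circle) := (Subgroup.zpowers g).topologicalClosure with hK
  by_contra hne
  obtain ⟨x, hx⟩ : ∃ x : Circle × Circle, x ∉ K := by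
    by_contra hall
    push_neg at hall
    exact hne (Set.eq_univ_of_forall hall)
  have hKclosed : IsClosed (K : Set (Circle × Circle)) :=
    Subgroup.isClosed_topologicalClosure _
  have hgK : g ∈ K := Subgroup.le_topologicalClosure _ (Subgroup.mem_zpowers g)
  -- Haar measure on K
  borelize (↥K)
  haveI : CompactSpace ↥K := isCompact_iff_compactSpace.1 (hKclosed.isCompact)
  set μ : Measure ↥K := Measure.haar with hμ
  -- integrability of continuous functions
  have hint : ∀ {f : ↥K → ℂ}, Continuous f → Integrable f μ := fun hf =>
    hf.integrable_of_hasCompactSupport (HasCompactSupport.of_compactSpace _)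
  -- characters with nontrivial index integrate to zero
  have hvanish : ∀ m n : ℤ, ¬(m = 0 ∧ n = 0) → ∫ k : ↥K, chi m n (k : Circle × Circle) ∂μ = 0 := by
    intro m n hmn
    by_cases htriv : ∀ k : ↥K, chi m n (k : Circle × Circle) = 1
    · exact absurd (htriv ⟨g, hgK⟩) (chi_g_ne_one hind hmn)
    · push_neg at htriv
      obtain ⟨k₀, hk₀⟩ := htriv
      have hinv : ∫ k : ↥K, chi m n ((k₀ * k : ↥K) : Circle × Circle) ∂μ
          = ∫ k : ↥K, chi m n (k : Circle × Circle) ∂μ :=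
        integral_mul_left_eq_self (fun k : ↥K => chi m n (k : Circle × Circle)) k₀
      have hmul : ∀ k : ↥K, chi m n ((k₀ * k : ↥K) : Circle × Circle)
          = chi m n (k₀ : Circle × Circle) * chi m n (k : Circle × Circle) := by
        intro k
        rw [← map_mul]
        rfl
      rw [integral_congr_ae (Filter.Eventually.of_forall hmul), integral_const_mul] at hinv
      have : (chi m n (k₀ : Circle × Circle) - 1) * ∫ k : ↥K, chi m n (k : Circle × Circle) ∂μ = 0 := by
        rw [sub_mul, one_mul, hinv, sub_self]
      rcases mul_eq_zero.1 this with h | h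
      · exact absurd (by linear_combination h) hk₀
      · exact h
  -- the two integration functionals agree on all continuous functions
  have hcont : ∀ (e : ↥K → Circle × Circle), Continuous e →
      Continuous fun f : C(Circle × Circle, ℂ) => ∫ k, f (e k) ∂μ := by
    intro e he
    refine Metric.continuous_iff.2 fun f ε hε => ?_
    by_cases hμ0 : (μ Set.univ).toReal = 0
    · exact ⟨1, one_pos, fun f' _ => by
        have b1 : ‖(∫ k, f' (e k) ∂μ) - ∫ k, f (e k) ∂μ‖ ≤ 0 := by
          rw [← integral_sub (hint (f'.continuous.comp he) : Integrable (fun k => f' (e k)) μ) (hint (f.continuous.comp he) : Integrable (fun k => f (e k)) μ)]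
          calc ‖∫ k, (f' (e k) - f (e k)) ∂μ‖
              ≤ (dist f' f) * (μ Set.univ).toReal := by
                refine norm_integral_le_of_norm_le_const (Filter.Eventually.of_forall fun k => ?_)
                rw [← dist_eq_norm]
                exact ContinuousMap.dist_apply_le_dist _
            _ = 0 := by rw [hμ0, mul_zero]
        rw [dist_eq_norm]
        exact lt_of_le_of_lt b1 hε⟩
    · have hμpos : 0 < (μ Set.univ).toReal :=
        lt_of_le_of_ne ENNReal.toReal_nonneg (Ne.symm hμ0)
      refine ⟨ε / (μ Set.univ).toReal, div_pos hε hμpos, fun f' hdist => ?_⟩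
      have b1 : dist (∫ k, f' (e k) ∂μ) (∫ k, f (e k) ∂μ)
          ≤ (dist f' f) * (μ Set.univ).toReal := by
        rw [dist_eq_norm,
          ← integral_sub (hint (f'.continuous.comp he) : Integrable (fun k => f' (e k)) μ) (hint (f.continuous.comp he) : Integrable (fun k => f (e k)) μ)]
        refine norm_integral_le_of_norm_le_const (Filter.Eventually.of_forall fun k => ?_)
        have := ContinuousMap.dist_apply_le_dist (f := f') (g := f) (e k)
        rwa [dist_eq_norm] at this
      calc dist (∫ k, f' (e k) ∂μ) (∫ k, f (e k) ∂μ)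
          ≤ (dist f' f) * (μ Set.univ).toReal := b1
        _ < (ε / (μ Set.univ).toReal) * (μ Set.univ).toReal := by
            exact mul_lt_mul_of_pos_right hdist hμpos
        _ = ε := div_mul_cancel₀ _ (ne_of_gt hμpos)
  -- the two integration functionals agree on the span of characters, hence everywhere
  have hfun : ∀ f : C(Circle × Circle, ℂ),
      ∫ k : ↥K, f (k : Circle × Circle) ∂μ = ∫ k : ↥K, f (x * (k : Circle × Circle)) ∂μ := by
    set s : Set C(Circle × Circle, ℂ) :=
      {f | ∫ k : ↥K, f (k : Circle × Circle) ∂μ = ∫ k : ↥K, f (x * (k : Circle × Circle)) ∂μ}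
      with hs
    have hclosed : IsClosed s :=
      isClosed_eq (hcont _ continuous_subtype_val)
        (hcont _ (continuous_const.mul continuous_subtype_val))
    have hspan : ((Submodule.span ℂ (range fun mn : ℤ × ℤ => chiC mn.1 mn.2) :
        Submodule ℂ C(Circle × Circle, ℂ)) : Set C(Circle × Circle, ℂ)) ⊆ s := by
      intro f hf
      refine Submodule.span_induction ?_ ?_ ?_ ?_ hf
      · rintro - ⟨⟨m, n⟩, rfl⟩
        by_cases hmn : m = 0 ∧ n = 0
        · obtain ⟨rfl, rfl⟩ := hmn
          show (∫ k : ↥K, chiC 0 0 (k : Circle × Circle) ∂μ)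
            = ∫ k : ↥K, chiC 0 0 (x * (k : Circle × Circle)) ∂μ
          rw [chiC_zero]
          simp
        · have h1 := hvanish m n hmn
          show (∫ k : ↥K, chiC m n (k : Circle × Circle) ∂μ)
            = ∫ k : ↥K, chiC m n (x * (k : Circle × Circle)) ∂μ
          have hm : ∀ k : ↥K, chiC m n (x * (k : Circle × Circle))
              = chi m n x * chi m n (k : Circle × Circle) := fun k => map_mul (chi m n) _ _
          have hL : (∫ k : ↥K, chiC m n (k : Circle × Circle) ∂μ) = 0 := h1
          rw [hL, integral_congr_ae (Filter.Eventually.of_forall hm), integral_const_mul, h1,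
            mul_zero]
      · show (∫ _ : ↥K, (0 : C(Circle × Circle, ℂ)) 1 ∂μ) = ∫ _ : ↥K, (0 : ℂ) ∂μ
        simp
      · intro f g _ _ hfs hgs
        show (∫ k : ↥K, (f (k : Circle × Circle) + g (k : Circle × Circle)) ∂μ)
          = ∫ k : ↥K, (f (x * (k : Circle × Circle)) + g (x * (k : Circle × Circle))) ∂μ
        rw [integral_add
            (hint (f.continuous.comp continuous_subtype_val) :
              Integrable (fun k : ↥K => f (k : Circle × Circle)) μ)
            (hint (g.continuous.comp continuous_subtype_val) :
              Integrable (fun k : ↥K => g (k : Circle × Circle)) μ),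
          integral_add
            (hint (f.continuous.comp (continuous_const.mul continuous_subtype_val)) :
              Integrable (fun k : ↥K => f (x * (k : Circle × Circle))) μ)
            (hint (g.continuous.comp (continuous_const.mul continuous_subtype_val)) :
              Integrable (fun k : ↥K => g (x * (k : Circle × Circle))) μ)]
        exact congrArg₂ (· + ·) hfs hgs
      · intro c f _ hfs
        show (∫ k : ↥K, c • f (k : Circle × Circle) ∂μ)
          = ∫ k : ↥K, c • f (x * (k : Circle × Circle)) ∂μ
        rw [integral_smul, integral_smul, hfs]
    intro f
    have : f ∈ closure s := by
      have hd := span_chi_dense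
      have : f ∈ closure ((Submodule.span ℂ (range fun mn : ℤ × ℤ => chiC mn.1 mn.2) :
          Submodule ℂ C(Circle × Circle, ℂ)) : Set C(Circle × Circle, ℂ)) := by
        rw [hd.closure_eq]; trivial
      exact closure_mono hspan this
    rwa [hclosed.closure_eq] at this
  -- Urysohn function separating K and x • K
  have hxKclosed : IsClosed ((x * ·) '' (K : Set (Circle × Circle))) :=
    (Homeomorph.mulLeft x).isClosedMap _ hKclosed
  have hdisj : Disjoint (K : Set (Circle × Circle)) ((x * ·) '' (K : Set (Circle × Circle))) := by
    rw [Set.disjoint_left]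
    rintro a haK ⟨k, hkK, rfl⟩
    exact hx (by simpa using mul_mem haK (inv_mem hkK))
  obtain ⟨f, hf0, hf1, -⟩ := exists_continuous_zero_one_of_isClosed hKclosed hxKclosed hdisj
  set fC : C(Circle × Circle, ℂ) := ⟨fun p => ((f p : ℝ) : ℂ), by continuity⟩ with hfC
  have h1 : (∫ k : ↥K, fC (k : Circle × Circle) ∂μ) = 0 := by
    have hz : ∀ k : ↥K, fC (k : Circle × Circle) = 0 := fun k => by
      simp [hfC, hf0 k.2]
    rw [integral_congr_ae (Filter.Eventually.of_forall hz), integral_zero]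
  have h2 : (∫ k : ↥K, fC (x * (k : Circle × Circle)) ∂μ) = ((μ Set.univ).toReal : ℂ) := by
    have ho : ∀ k : ↥K, fC (x * (k : Circle × Circle)) = 1 := fun k => by
      have : f (x * (k : Circle × Circle)) = 1 := hf1 ⟨(k : Circle × Circle), k.2, rfl⟩
      simp [hfC, this]
    rw [integral_congr_ae (Filter.Eventually.of_forall ho), integral_const]
    simp
    rfl
  have hμuniv : (μ Set.univ).toReal ≠ 0 := by
    have h0 : μ Set.univ ≠ 0 :=
      (isOpen_univ.measure_ne_zero μ ⟨⟨1, one_mem K⟩, trivial⟩)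
    exact ENNReal.toReal_ne_zero.2 ⟨h0, measure_ne_top μ _⟩
  have : ((μ Set.univ).toReal : ℂ) = 0 := by rw [← h2, ← hfun fC, h1]
  exact hμuniv (by exact_mod_cast this)

end KroneckerAux

/-- The orbit {(e^{inα}, e^{inβ})} is dense in the torus when α, β, π are
ℚ-linearly independent. -/
theorem orbit_dense_in_torus (α β : ℝ)
    (hind : LinearIndependent ℚ ![α, β, π]) :
    closure {p : ℂ × ℂ | ∃ n : ℤ,
        p = (Complex.exp ((n : ℂ) * (α : ℂ) * Complex.I),
             Complex.exp ((n : ℂ) * (β : ℂ) * Complex.I))} =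
      {z : ℂ | ‖z‖ = 1} ×ˢ {u : ℂ | ‖u‖ = 1} := by
  classical
  set g : Circle × Circle := (Circle.exp α, Circle.exp β) with hg
  have hK := KroneckerAux.closure_zpowers_eq_univ hind
  set e : Circle × Circle → ℂ × ℂ := fun p => ((p.1 : ℂ), (p.2 : ℂ)) with he'
  have he : Continuous e :=
    Continuous.prodMk (continuous_fst.subtype_val) (continuous_snd.subtype_val)
  have hinj : Function.Injective e := by
    rintro ⟨a, b⟩ ⟨c, d⟩ h
    obtain ⟨h1, h2⟩ := Prod.mk.injEq .. ▸ h
    exact Prod.ext (Subtype.ext h1) (Subtype.ext h2)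
  have hemb := he.isClosedEmbedding hinj
  -- identify the orbit with the image of the cyclic subgroup
  have hval : ∀ n : ℤ, e (g ^ n)
      = (Complex.exp ((n : ℂ) * (α : ℂ) * Complex.I),
         Complex.exp ((n : ℂ) * (β : ℂ) * Complex.I)) := by
    intro n
    have h1 : (g ^ n).1 = Circle.exp α ^ n := rfl
    have h2 : (g ^ n).2 = Circle.exp β ^ n := rfl
    have c1 : ((Circle.exp α ^ n : Circle) : ℂ) = Complex.exp ((n : ℂ) * (α : ℂ) * Complex.I) := by
      rw [KroneckerAux.exp_zpow, Circle.coe_exp]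
      push_cast
      ring_nf
    have c2 : ((Circle.exp β ^ n : Circle) : ℂ) = Complex.exp ((n : ℂ) * (β : ℂ) * Complex.I) := by
      rw [KroneckerAux.exp_zpow, Circle.coe_exp]
      push_cast
      ring_nf
    rw [he']
    dsimp only
    rw [h1, h2, c1, c2]
  have horb : {p : ℂ × ℂ | ∃ n : ℤ,
        p = (Complex.exp ((n : ℂ) * (α : ℂ) * Complex.I),
             Complex.exp ((n : ℂ) * (β : ℂ) * Complex.I))}
      = e '' ((Subgroup.zpowers g : Subgroup (Circle × Circle)) : Set (Circle × Circle)) := by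
    ext p
    constructor
    · rintro ⟨n, rfl⟩
      exact ⟨g ^ n, ⟨n, rfl⟩, hval n⟩
    · rintro ⟨q, ⟨n, rfl⟩, rfl⟩
      refine ⟨n, ?_⟩
      rw [hval n]
  rw [horb, hemb.closure_image_eq, ← Subgroup.topologicalClosure_coe, hK, Set.image_univ]
  ext ⟨z, u⟩
  constructor
  · rintro ⟨⟨a, b⟩, hab⟩
    rw [← hab]
    exact ⟨mem_sphere_zero_iff_norm.1 a.2, mem_sphere_zero_iff_norm.1 b.2⟩
  · rintro ⟨hz, hu⟩
    have hz' : z ∈ Submonoid.unitSphere ℂ := by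
      simp only [Submonoid.unitSphere, Submonoid.mem_mk, Subsemigroup.mem_mk,
        mem_sphere_zero_iff_norm]
      exact hz
    have hu' : u ∈ Submonoid.unitSphere ℂ := by
      simp only [Submonoid.unitSphere, Submonoid.mem_mk, Subsemigroup.mem_mk,
        mem_sphere_zero_iff_norm]
      exact hu
    exact ⟨((⟨z, hz'⟩ : Circle), (⟨u, hu'⟩ : Circle)), rfl⟩
end

section
/- Let α, β ∈ (0, 2π) with α, β, π linearly independent over ℚ, and let ρ = (δ_α + δ_β)/2 be a measure on the circle group 𝕋. Then the closure of the set of Fourier–Stieltjes coefficients {ρ̂(n) : n ∈ ℤ} equals the closed unit disk, where ρ̂(n) = (e^{−inα} + e^{−inβ})/2. -/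
open Complex MeasureTheory AddCircle

variable {T : ℝ} [hT : Fact (0 < T)]

theorem char_eq_fourier (F : C(AddCircle T, ℂ))
    (hmul : ∀ x y, F (x + y) = F x * F y) (hnorm : ∀ x, ‖F x‖ = 1) :
    ∃ n : ℤ, ∀ x, F x = fourier n x := by
  have h1 : ∑' i : ℤ, ‖fourierCoeff (F : AddCircle T → ℂ) i‖ ^ 2 = 1 := by
    have := tsum_sq_fourierCoeff (ContinuousMap.toLp (E := ℂ) 2 haarAddCircle ℂ F)
    simp_rw [fourierCoeff_toLp] at this
    rw [this]
    have : ∫ t : AddCircle T, ‖(ContinuousMap.toLp (E := ℂ) 2 haarAddCircle ℂ F) t‖ ^ 2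
        ∂haarAddCircle = ∫ t : AddCircle T, ‖F t‖ ^ 2 ∂haarAddCircle := by
      apply integral_congr_ae
      filter_upwards [ContinuousMap.coeFn_toLp (p := 2) haarAddCircle (𝕜 := ℂ) F] with t ht
      rw [ht]
    rw [this]
    simp_rw [hnorm]
    simp
  have h2 : ∃ n : ℤ, fourierCoeff (F : AddCircle T → ℂ) n ≠ 0 := by
    by_contra h
    push_neg at h
    simp_rw [h] at h1
    simpa using h1
  obtain ⟨n, hn⟩ := h2
  refine ⟨n, fun y => ?_⟩
  have h4 : ∀ t : AddCircle T, fourier (-n) (t + y) • F (t + y)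
      = (fourier (-n) y * F y) • (fourier (-n) t • F t) := by
    intro t
    have : (fourier (-n) (t + y) : ℂ) = fourier (-n) t * fourier (-n) y := by
      simp only [fourier_apply, smul_add, toCircle_add]
      push_cast
      ring
    rw [this, hmul t y]
    simp only [smul_eq_mul]
    ring
  have key : fourierCoeff (F : AddCircle T → ℂ) n
      = (fourier (-n) y * F y) * fourierCoeff (F : AddCircle T → ℂ) n := by
    calc fourierCoeff (F : AddCircle T → ℂ) n
        = ∫ t : AddCircle T, fourier (-n) (t + y) • F (t + y) ∂haarAddCircle := by
          rw [fourierCoeff]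
          exact (integral_add_right_eq_self (μ := haarAddCircle)
            (fun t : AddCircle T => fourier (-n) t • F t) y).symm
      _ = ∫ t : AddCircle T, (fourier (-n) y * F y) • (fourier (-n) t • F t) ∂haarAddCircle := by
          simp_rw [h4]
      _ = (fourier (-n) y * F y) * fourierCoeff (F : AddCircle T → ℂ) n := by
          rw [integral_smul, fourierCoeff, smul_eq_mul]
  have h5 : fourier (-n) y * F y = 1 := by
    have : (fourier (-n) y * F y) * fourierCoeff (F : AddCircle T → ℂ) n
        = 1 * fourierCoeff (F : AddCircle T → ℂ) n := by rw [← key, one_mul]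
    exact mul_right_cancel₀ hn this
  have h6 : (fourier n y : ℂ) * (fourier (-n) y) = 1 := by
    rw [← fourier_add]
    simp [fourier_zero]
  calc F y = (fourier n y * fourier (-n) y) * F y := by rw [h6]; ring
    _ = fourier n y * (fourier (-n) y * F y) := by ring
    _ = fourier n y := by rw [h5]; ring

theorem cont_endo_eq_zsmul (σ : AddCircle T →+ AddCircle T) (hσ : Continuous σ) :
    ∃ n : ℤ, ∀ x, σ x = n • x := by
  have hT0 : T ≠ 0 := hT.out.ne'
  set F : C(AddCircle T, ℂ) := ⟨fun x => (toCircle (σ x) : ℂ),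
    continuous_subtype_val.comp (continuous_toCircle.comp hσ)⟩ with hF
  obtain ⟨n, hn⟩ := char_eq_fourier F
    (by intro x y; simp [hF, map_add, toCircle_add])
    (by intro x; simp [hF, Circle.norm_coe])
  refine ⟨n, fun x => ?_⟩
  have := hn x
  rw [fourier_apply] at this
  simp only [hF, ContinuousMap.coe_mk] at this
  exact injective_toCircle hT0 (Subtype.coe_injective this)

open AddCircle

variable {T : ℝ} [hT : Fact (0 < T)]

theorem pi_T_eq_zero : (QuotientAddGroup.mk' (AddSubgroup.zmultiples T)) T = 0 := by
  have : T ∈ AddSubgroup.zmultiples T := AddSubgroup.mem_zmultiples T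
  simpa [QuotientAddGroup.eq_zero_iff] using this

theorem bounded_exponent_of_not_top (K : AddSubgroup (AddCircle T))
    (hK : IsClosed (K : Set (AddCircle T))) (hKtop : K ≠ ⊤) :
    ∃ m : ℤ, m ≠ 0 ∧ ∀ y ∈ K, m • y = 0 := by
  have hT0 : T ≠ 0 := hT.out.ne'
  set π' : ℝ →+ AddCircle T := QuotientAddGroup.mk' (AddSubgroup.zmultiples T) with hπ'
  have hπcont : Continuous π' := continuous_quotient_mk'
  have hπsurj : Function.Surjective π' := Quotient.mk''_surjective
  set K' : AddSubgroup ℝ := K.comap π' with hK'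
  have hK'closed : IsClosed (K' : Set ℝ) := hK.preimage hπcont
  rcases K'.dense_or_cyclic with hdense | ⟨g, hg⟩
  · exfalso
    apply hKtop
    have huniv : (K' : Set ℝ) = Set.univ := by
      rw [← hK'closed.closure_eq, hdense.closure_eq]
    ext y
    simp only [AddSubgroup.mem_top, iff_true]
    obtain ⟨r, hr⟩ := hπsurj y
    have hrK : r ∈ (K' : Set ℝ) := huniv ▸ Set.mem_univ r
    exact hr ▸ (AddSubgroup.mem_comap.mp hrK)
  · have hTK' : T ∈ K' := by
      simp only [hK', AddSubgroup.mem_comap]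
      rw [show π' T = 0 from pi_T_eq_zero]
      exact K.zero_mem
    rw [hg, ← AddSubgroup.zmultiples_eq_closure] at hTK'
    obtain ⟨k, hk⟩ := hTK'
    have hk' : k • g = T := hk
    have hk0 : k ≠ 0 := by
      rintro rfl
      simp at hk'
      exact hT0 hk'.symm
    refine ⟨k, hk0, fun y hy => ?_⟩
    obtain ⟨r, hr⟩ := hπsurj y
    have hrK' : r ∈ K' := by simp only [hK', AddSubgroup.mem_comap, hr]; exact hy
    rw [hg, ← AddSubgroup.zmultiples_eq_closure] at hrK'
    obtain ⟨j, hj⟩ := hrK'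
    have hj' : j • g = r := hj
    rw [← hr, ← map_zsmul π' k r, ← hj', smul_comm, hk', map_zsmul,
      show π' T = 0 from pi_T_eq_zero, smul_zero]

theorem dense_zmultiples_of_infinite_order (a : AddCircle T)
    (ha : ∀ p : ℤ, p • a = 0 → p = 0) :
    Dense (Set.range fun n : ℤ => n • a) := by
  have hT0 : T ≠ 0 := hT.out.ne'
  set π' : ℝ →+ AddCircle T := QuotientAddGroup.mk' (AddSubgroup.zmultiples T) with hπ'
  have hπcont : Continuous π' := continuous_quotient_mk'
  have hπsurj : Function.Surjective π' := Quotient.mk''_surjective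
  obtain ⟨x₀, hx₀⟩ := hπsurj a
  have hπT : π' T = 0 := pi_T_eq_zero
  set S : AddSubgroup ℝ := AddSubgroup.closure {x₀, T} with hS
  have hSdense : Dense (S : Set ℝ) := by
    rcases S.dense_or_cyclic with hdense | ⟨g, hg⟩
    · exact hdense
    · exfalso
      have hx₀S : x₀ ∈ S := AddSubgroup.subset_closure (by simp)
      have hTS : T ∈ S := AddSubgroup.subset_closure (by simp)
      rw [hg, ← AddSubgroup.zmultiples_eq_closure] at hx₀S hTS
      obtain ⟨p, hp⟩ := hx₀S
      obtain ⟨q, hq⟩ := hTS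
      have hp' : p • g = x₀ := hp
      have hq' : q • g = T := hq
      have hq0 : q ≠ 0 := by
        rintro rfl
        simp at hq'
        exact hT0 hq'.symm
      have : q • a = 0 := by
        rw [← hx₀, ← map_zsmul π' q x₀, ← hp', smul_comm, hq', map_zsmul, hπT, smul_zero]
      exact hq0 (ha q this)
  have himg : π' '' (S : Set ℝ) ⊆ Set.range fun n : ℤ => n • a := by
    rintro - ⟨r, hr, rfl⟩
    rw [SetLike.mem_coe, AddSubgroup.mem_closure_pair] at hr
    obtain ⟨m, n, rfl⟩ := hr
    refine ⟨m, ?_⟩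
    rw [map_add, map_zsmul, map_zsmul, hx₀, hπT, smul_zero, add_zero]
  rw [dense_iff_closure_eq]
  apply Set.eq_univ_of_univ_subset
  intro y _
  obtain ⟨r, hr⟩ := hπsurj y
  have h1 : y ∈ π' '' (closure (S : Set ℝ)) := ⟨r, by rw [hSdense.closure_eq]; trivial, hr⟩
  have h2 : π' '' (closure (S : Set ℝ)) ⊆ closure (π' '' (S : Set ℝ)) :=
    image_closure_subset_closure_image hπcont
  exact closure_mono himg (h2 h1)

open AddCircle

variable {T : ℝ} [hT : Fact (0 < T)]

theorem dense_orbit_torus (a b : AddCircle T)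
    (hrel : ∀ p q : ℤ, p • a + q • b = 0 → p = 0 ∧ q = 0) :
    Dense (Set.range fun n : ℤ => n • ((a, b) : AddCircle T × AddCircle T)) := by
  have ha : ∀ p : ℤ, p • a = 0 → p = 0 := fun p h => (hrel p 0 (by simpa using h)).1
  have hdense_a := dense_zmultiples_of_infinite_order a ha
  set G : AddSubgroup (AddCircle T × AddCircle T) := AddSubgroup.zmultiples (a, b) with hG
  have hGrange : (G : Set (AddCircle T × AddCircle T))
      = Set.range fun n : ℤ => n • ((a, b) : AddCircle T × AddCircle T) := by
    ext z
    simp [hG, AddSubgroup.mem_zmultiples_iff, eq_comm]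
  set H : AddSubgroup (AddCircle T × AddCircle T) := G.topologicalClosure with hH
  have hHset : (H : Set (AddCircle T × AddCircle T)) = closure (G : Set _) := rfl
  have hHclosed : IsClosed (H : Set (AddCircle T × AddCircle T)) :=
    AddSubgroup.isClosed_topologicalClosure G
  have hGH : ∀ n : ℤ, n • ((a, b) : AddCircle T × AddCircle T) ∈ H := by
    intro n
    exact G.le_topologicalClosure (AddSubgroup.mem_zmultiples_iff.mpr ⟨n, rfl⟩)
  suffices hsuff : (H : Set (AddCircle T × AddCircle T)) = Set.univ by
    rw [dense_iff_closure_eq, ← hGrange, ← hHset, hsuff]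
  set K : AddSubgroup (AddCircle T) := H.comap (AddMonoidHom.inr (AddCircle T) (AddCircle T))
    with hK
  have hKmem : ∀ y : AddCircle T, y ∈ K ↔ ((0 : AddCircle T), y) ∈ H := fun y => Iff.rfl
  have hKclosed : IsClosed (K : Set (AddCircle T)) := by
    have : (K : Set (AddCircle T))
        = (fun y : AddCircle T => ((0 : AddCircle T), y)) ⁻¹' (H : Set _) := rfl
    rw [this]
    exact hHclosed.preimage (Continuous.prodMk continuous_const continuous_id)
  by_cases hKtop : K = ⊤
  · -- K = ⊤ : density holds
    apply Set.eq_univ_of_univ_subset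
    rintro ⟨x, y⟩ -
    have hstep : ∀ n : ℤ, ((n • a, y) : AddCircle T × AddCircle T) ∈ H := by
      intro n
      have h1 : (n • a, n • b) ∈ H := hGH n
      have h2 : ((0 : AddCircle T), y - n • b) ∈ H := by
        rw [← hKmem]
        rw [hKtop]
        trivial
      have := H.add_mem h1 h2
      simpa using this
    have hclosedfiber : IsClosed {t : AddCircle T | ((t, y) : _ × _) ∈ H} := by
      have : {t : AddCircle T | ((t, y) : _ × _) ∈ H}
          = (fun t : AddCircle T => ((t, y) : _ × _)) ⁻¹' (H : Set _) := rfl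
      rw [this]
      exact hHclosed.preimage (Continuous.prodMk continuous_id continuous_const)
    have hsub : Set.range (fun n : ℤ => n • a) ⊆ {t : AddCircle T | ((t, y) : _ × _) ∈ H} := by
      rintro - ⟨n, rfl⟩
      exact hstep n
    have : {t : AddCircle T | ((t, y) : _ × _) ∈ H} = Set.univ := by
      apply Set.eq_univ_of_univ_subset
      calc Set.univ = closure (Set.range fun n : ℤ => n • a) := hdense_a.closure_eq.symm
        _ ⊆ closure {t : AddCircle T | ((t, y) : _ × _) ∈ H} := closure_mono hsub
        _ = {t : AddCircle T | ((t, y) : _ × _) ∈ H} := hclosedfiber.closure_eq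
    have hx : x ∈ {t : AddCircle T | ((t, y) : _ × _) ∈ H} := this ▸ Set.mem_univ x
    exact hx
  · -- K ≠ ⊤ : contradiction with independence
    exfalso
    obtain ⟨m, hm0, hm⟩ := bounded_exponent_of_not_top K hKclosed hKtop
    set φ : AddCircle T × AddCircle T →+ AddCircle T × AddCircle T :=
      (AddMonoidHom.id (AddCircle T)).prodMap (zsmulAddGroupHom m) with hφ
    have hφapply : ∀ p : AddCircle T × AddCircle T, φ p = (p.1, m • p.2) := fun p => rfl
    set H' : AddSubgroup (AddCircle T × AddCircle T) := H.map φ with hH'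
    have hH'mem : ∀ z : AddCircle T × AddCircle T,
        z ∈ H' ↔ ∃ w ∈ H, (w.1, m • w.2) = z := by
      intro z
      simp [hH', AddSubgroup.mem_map, hφapply]
    have hHcomp : IsCompact (H : Set (AddCircle T × AddCircle T)) := hHclosed.isCompact
    have hφcont : Continuous φ :=
      (continuous_fst).prodMk ((continuous_zsmul m).comp continuous_snd)
    have hH'comp : IsCompact (H' : Set (AddCircle T × AddCircle T)) := by
      have : (H' : Set (AddCircle T × AddCircle T)) = φ '' (H : Set _) := by
        rw [hH']; exact AddSubgroup.coe_map φ H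
      rw [this]
      exact hHcomp.image hφcont
    have hvert : ∀ z : AddCircle T, ((0 : AddCircle T), z) ∈ H' → z = 0 := by
      intro z hz
      rw [hH'mem] at hz
      obtain ⟨⟨x, y⟩, hw, heq⟩ := hz
      rw [Prod.ext_iff] at heq
      obtain ⟨h1, h2⟩ := heq
      simp only at h1 h2
      subst h1
      rw [← h2]
      exact hm y ((hKmem y).mpr hw)
    have hinj : ∀ (x y₁ y₂ : AddCircle T), (x, y₁) ∈ H' → (x, y₂) ∈ H' → y₁ = y₂ := by
      intro x y₁ y₂ h1 h2
      have := H'.sub_mem h1 h2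
      simp only [Prod.mk_sub_mk, sub_self] at this
      have := hvert _ this
      linear_combination (norm := abel1) this
    -- first projection of H' is everything
    have horbit : ∀ n : ℤ, ((n • a, m • (n • b)) : AddCircle T × AddCircle T) ∈ H' := by
      intro n
      rw [hH'mem]
      exact ⟨(n • a, n • b), hGH n, rfl⟩
    have hS₁ : Prod.fst '' (H' : Set (AddCircle T × AddCircle T)) = Set.univ := by
      apply Set.eq_univ_of_univ_subset
      have hclosed : IsClosed (Prod.fst '' (H' : Set (AddCircle T × AddCircle T))) :=
        (hH'comp.image continuous_fst).isClosed
      calc Set.univ = closure (Set.range fun n : ℤ => n • a) := hdense_a.closure_eq.symm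
        _ ⊆ closure (Prod.fst '' (H' : Set (AddCircle T × AddCircle T))) := by
            apply closure_mono
            rintro - ⟨n, rfl⟩
            exact Set.mem_image_of_mem Prod.fst (SetLike.mem_coe.mpr (horbit n))
        _ = Prod.fst '' (H' : Set (AddCircle T × AddCircle T)) := hclosed.closure_eq
    -- build the continuous endomorphism σ
    set E := {p : AddCircle T × AddCircle T // p ∈ H'} with hE
    have : CompactSpace E := isCompact_iff_compactSpace.mp hH'comp
    have hpcont : Continuous (fun e : E => (e : AddCircle T × AddCircle T).1) :=
      continuous_fst.comp continuous_subtype_val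
    have hpbij : Function.Bijective (fun e : E => (e : AddCircle T × AddCircle T).1) := by
      constructor
      · rintro ⟨⟨x₁, y₁⟩, h1⟩ ⟨⟨x₂, y₂⟩, h2⟩ h
        simp only at h
        subst h
        exact Subtype.ext (Prod.ext rfl (hinj x₁ y₁ y₂ h1 h2))
      · intro x
        have : x ∈ Prod.fst '' (H' : Set (AddCircle T × AddCircle T)) := by rw [hS₁]; trivial
        obtain ⟨⟨x', y⟩, hmem, hx⟩ := this
        exact ⟨⟨(x', y), hmem⟩, hx⟩
    set e : E ≃ AddCircle T := Equiv.ofBijective _ hpbij with he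
    set homeo : E ≃ₜ AddCircle T := Continuous.homeoOfEquivCompactToT2 (f := e) hpcont
      with hhomeo
    set σ : AddCircle T → AddCircle T :=
      fun t => ((homeo.symm t : E) : AddCircle T × AddCircle T).2 with hσ
    have hσcont : Continuous σ :=
      continuous_snd.comp (continuous_subtype_val.comp homeo.symm.continuous)
    have hgraph : ∀ t : AddCircle T, ((t, σ t) : AddCircle T × AddCircle T) ∈ H' := by
      intro t
      have h1 : ((homeo.symm t : E) : AddCircle T × AddCircle T) ∈ H' := (homeo.symm t).2
      have h2 : ((homeo.symm t : E) : AddCircle T × AddCircle T).1 = t := by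
        have := homeo.apply_symm_apply t
        exact this
      have h3 : ((homeo.symm t : E) : AddCircle T × AddCircle T) = (t, σ t) := by
        rw [hσ]
        exact Prod.ext h2 rfl
      rw [← h3]
      exact h1
    have hσadd : ∀ s t : AddCircle T, σ (s + t) = σ s + σ t := by
      intro s t
      have h1 : ((s + t, σ s + σ t) : AddCircle T × AddCircle T) ∈ H' := by
        have := H'.add_mem (hgraph s) (hgraph t)
        simpa using this
      exact (hinj (s + t) (σ (s + t)) (σ s + σ t) (hgraph (s + t)) h1)
    have hσ0 : σ 0 = 0 := hvert _ (hgraph 0)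
    obtain ⟨n, hn⟩ := cont_endo_eq_zsmul ⟨⟨σ, hσ0⟩, hσadd⟩ hσcont
    have hσn : ∀ x, σ x = n • x := hn
    -- conclude
    have hab : ((a, m • b) : AddCircle T × AddCircle T) ∈ H' := by
      have := horbit 1
      simpa using this
    have : m • b = σ a := hinj a (m • b) (σ a) hab (hgraph a)
    have hcontra : n • a + (-m) • b = 0 := by
      rw [hσn a] at this
      rw [neg_zsmul, ← this]
      abel
    exact hm0 (neg_eq_zero.mp (hrel n (-m) hcontra).2)

open Complex Real AddCircle

/-- The Fourier–Stieltjes coefficients ρ̂(n) = (e^{-inα}+e^{-inβ})/2 of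
ρ = (δ_α+δ_β)/2 are dense in the closed unit disk. -/
theorem fourier_range_dense_in_disk (α β : ℝ)
    (hα : α ∈ Set.Ioo (0 : ℝ) (2 * π)) (hβ : β ∈ Set.Ioo (0 : ℝ) (2 * π))
    (hind : LinearIndependent ℚ ![α, β, π]) :
    closure {w : ℂ | ∃ n : ℤ,
        w = (Complex.exp (-((n : ℂ) * (α : ℂ)) * Complex.I) +
             Complex.exp (-((n : ℂ) * (β : ℂ)) * Complex.I)) / 2} =
      Metric.closedBall (0 : ℂ) 1 := by
  have hπ : (0 : ℝ) < 2 * π := by positivity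
  haveI : Fact ((0 : ℝ) < 2 * π) := ⟨hπ⟩
  set T : ℝ := 2 * π with hTdef
  -- the function AddCircle (2π) → ℂ, x ↦ exp (-x * I)
  set g : AddCircle T → ℂ := fun x => (toCircle (-x) : ℂ) with hg
  have hgmk : ∀ x : ℝ, g ((x : ℝ) : AddCircle T) = Complex.exp (-x * Complex.I) := by
    intro x
    have hneg : -((x : ℝ) : AddCircle T) = (((-x : ℝ)) : AddCircle T) :=
      (AddCircle.coe_neg T).symm
    rw [hg]
    simp only [hneg, toCircle_apply_mk, Circle.coe_exp]
    congr 1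
    rw [hTdef]
    rw [div_self (by positivity : (2:ℝ) * π ≠ 0)]
    push_cast
    ring
  have hgcont : Continuous g :=
    continuous_subtype_val.comp (continuous_toCircle.comp continuous_neg)
  set Φ : AddCircle T × AddCircle T → ℂ := fun p => (g p.1 + g p.2) / 2 with hΦ
  have hΦcont : Continuous Φ := by
    apply Continuous.div_const
    exact (hgcont.comp continuous_fst).add (hgcont.comp continuous_snd)
  set a : AddCircle T := ((α : ℝ) : AddCircle T) with ha
  set b : AddCircle T := ((β : ℝ) : AddCircle T) with hb
  -- independence condition
  have hrel : ∀ p q : ℤ, p • a + q • b = 0 → p = 0 ∧ q = 0 := by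
    intro p q hpq
    have h1 : (((p * α + q * β : ℝ)) : AddCircle T) = 0 := by
      rw [← hpq, ha, hb, ← AddCircle.coe_zsmul, ← AddCircle.coe_zsmul, ← AddCircle.coe_add]
      congr 1
      simp [zsmul_eq_mul]
    rw [AddCircle.coe_eq_zero_iff] at h1
    obtain ⟨k, hk⟩ := h1
    have hk' : (p : ℝ) * α + q * β = k * (2 * π) := by
      rw [← hk, hTdef, zsmul_eq_mul]
    have hlin := Fintype.linearIndependent_iff.mp hind ![(p : ℚ), (q : ℚ), (-(2 * k) : ℚ)]
    have hzero : ∑ i : Fin 3, (![(p : ℚ), (q : ℚ), (-(2 * k) : ℚ)] i) • (![α, β, π] i) = 0 := by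
      simp only [Fin.sum_univ_three]
      simp only [Matrix.cons_val_zero, Matrix.cons_val_one, Matrix.head_cons,
        Matrix.cons_val_two, Matrix.tail_cons]
      rw [Rat.smul_def, Rat.smul_def, Rat.smul_def]
      push_cast
      linarith [hk']
    have := hlin hzero
    constructor
    · have h0 := this 0
      simpa using h0
    · have h1 := this 1
      simpa using h1
  have hdense := dense_orbit_torus a b hrel
  -- the orbit maps to the set S
  set S : Set ℂ := {w : ℂ | ∃ n : ℤ,
      w = (Complex.exp (-((n : ℂ) * (α : ℂ)) * Complex.I) +
           Complex.exp (-((n : ℂ) * (β : ℂ)) * Complex.I)) / 2} with hS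
  have horbitΦ : ∀ n : ℤ, Φ (n • ((a, b) : AddCircle T × AddCircle T))
      = (Complex.exp (-((n : ℂ) * (α : ℂ)) * Complex.I) +
         Complex.exp (-((n : ℂ) * (β : ℂ)) * Complex.I)) / 2 := by
    intro n
    have h1 : n • ((a, b) : AddCircle T × AddCircle T)
        = ((((n * α : ℝ)) : AddCircle T), (((n * β : ℝ)) : AddCircle T)) := by
      rw [Prod.smul_def, ha, hb]
      congr 1 <;> · rw [← AddCircle.coe_zsmul]; congr 1; simp [zsmul_eq_mul]
    rw [h1, hΦ]
    simp only [hgmk]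
    congr 2 <;> · congr 1; push_cast; ring
  -- S is inside the closed ball
  have hSball : S ⊆ Metric.closedBall (0 : ℂ) 1 := by
    rintro w ⟨n, rfl⟩
    rw [mem_closedBall_zero_iff]
    have e1 : ‖Complex.exp (-((n : ℂ) * (α : ℂ)) * Complex.I)‖ = 1 := by
      rw [show -((n : ℂ) * (α : ℂ)) = ((-(n * α) : ℝ) : ℂ) by push_cast; ring]
      exact Complex.norm_exp_ofReal_mul_I _
    have e2 : ‖Complex.exp (-((n : ℂ) * (β : ℂ)) * Complex.I)‖ = 1 := by
      rw [show -((n : ℂ) * (β : ℂ)) = ((-(n * β) : ℝ) : ℂ) by push_cast; ring]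
      exact Complex.norm_exp_ofReal_mul_I _
    calc ‖(Complex.exp (-((n : ℂ) * (α : ℂ)) * Complex.I) +
             Complex.exp (-((n : ℂ) * (β : ℂ)) * Complex.I)) / 2‖
        ≤ (‖Complex.exp (-((n : ℂ) * (α : ℂ)) * Complex.I)‖ +
           ‖Complex.exp (-((n : ℂ) * (β : ℂ)) * Complex.I)‖) / 2 := by
          rw [norm_div, show ‖(2:ℂ)‖ = 2 by norm_num]
          gcongr
          exact norm_add_le _ _
      _ = 1 := by rw [e1, e2]; norm_num
  -- Φ is surjective onto the closed ball
  have hΦsurj : ∀ w ∈ Metric.closedBall (0 : ℂ) 1,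
      ∃ p : AddCircle T × AddCircle T, Φ p = w := by
    intro w hw
    rw [mem_closedBall_zero_iff] at hw
    set θ : ℝ := w.arg with hθ
    set d : ℝ := Real.arccos (‖w‖) with hd
    have habs : ‖w‖ ≤ 1 := by exact hw
    have h0 : (0:ℝ) ≤ ‖w‖ := norm_nonneg w
    have hcos : Real.cos d = ‖w‖ := Real.cos_arccos (by linarith) habs
    refine ⟨((((-θ - d : ℝ)) : AddCircle T), (((-θ + d : ℝ)) : AddCircle T)), ?_⟩
    rw [hΦ]
    simp only [hgmk]
    have h1 : -(-θ - d) = θ + d := by ring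
    have h2 : -(-θ + d) = θ - d := by ring
    rw [show (-((-θ - d : ℝ) : ℂ)) = ((θ : ℂ) + d) by push_cast; ring,
      show (-((-θ + d : ℝ) : ℂ)) = ((θ : ℂ) - d) by push_cast; ring]
    have hexp : Complex.exp (((θ : ℂ) + d) * Complex.I) + Complex.exp (((θ : ℂ) - d) * Complex.I)
        = 2 * Complex.cos (d : ℂ) * Complex.exp ((θ : ℂ) * Complex.I) := by
      rw [Complex.exp_mul_I, Complex.exp_mul_I, Complex.exp_mul_I,
        Complex.cos_add, Complex.sin_add, Complex.cos_sub, Complex.sin_sub]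
      ring
    rw [hexp, ← Complex.ofReal_cos, hcos]
    rw [show (2 * ((‖w‖ : ℝ) : ℂ) * Complex.exp ((θ : ℂ) * Complex.I)) / 2
        = ((‖w‖ : ℝ) : ℂ) * Complex.exp ((θ : ℂ) * Complex.I) from by ring]
    exact Complex.norm_mul_exp_arg_mul_I w
  -- conclude
  apply subset_antisymm
  · exact closure_minimal hSball Metric.isClosed_closedBall
  · intro w hw
    obtain ⟨p, hp⟩ := hΦsurj w hw
    have hpcl : p ∈ closure (Set.range fun n : ℤ => n • ((a, b) : AddCircle T × AddCircle T)) :=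
      hdense p
    have : Φ p ∈ Φ '' closure (Set.range fun n : ℤ => n • ((a, b) : AddCircle T × AddCircle T)) :=
      Set.mem_image_of_mem Φ hpcl
    have h2 := image_closure_subset_closure_image hΦcont this
    have h3 : Φ '' (Set.range fun n : ℤ => n • ((a, b) : AddCircle T × AddCircle T)) ⊆ S := by
      rintro - ⟨-, ⟨n, rfl⟩, rfl⟩
      refine ⟨n, ?_⟩
      exact horbitΦ n
    rw [← hp]
    exact closure_mono h3 h2
end

section
/- Let α, β ∈ (0, 2π) with α, β, π linearly independent over ℚ, and set ρ̂(n) = (e^{−inα} + e^{−inβ})/2. Then the closure of {ρ̂(n) : n ∈ 2ℤ} (values at even integers) equals the closed unit disk. -/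
open Complex Real

section Kronecker

/-- The subgroup `ℤ•(a,b) + ℤ² ⊆ ℝ²`. -/
def kronSubgroup (a b : ℝ) : AddSubgroup (ℝ × ℝ) where
  carrier := {x | ∃ n p q : ℤ, x = ((n : ℝ) * a + p, (n : ℝ) * b + q)}
  zero_mem' := ⟨0, 0, 0, by ext <;> simp⟩
  add_mem' := by
    rintro x y ⟨n, p, q, rfl⟩ ⟨n', p', q', rfl⟩
    exact ⟨n + n', p + p', q + q', by push_cast; simp [Prod.ext_iff]; constructor <;> ring⟩
  neg_mem' := by
    rintro x ⟨n, p, q, rfl⟩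
    exact ⟨-n, -p, -q, by push_cast; simp [Prod.ext_iff]; constructor <;> ring⟩

/-- The subgroup `ℤ•a + ℤ ⊆ ℝ`. -/
def kronSubgroup1 (a : ℝ) : AddSubgroup ℝ where
  carrier := {x | ∃ n p : ℤ, x = (n : ℝ) * a + p}
  zero_mem' := ⟨0, 0, by simp⟩
  add_mem' := by
    rintro x y ⟨n, p, rfl⟩ ⟨n', p', rfl⟩
    exact ⟨n + n', p + p', by push_cast; ring⟩
  neg_mem' := by
    rintro x ⟨n, p, rfl⟩
    exact ⟨-n, -p, by push_cast; ring⟩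

lemma kronSubgroup1_dense (a : ℝ) (ha : ∀ n m : ℤ, (n : ℝ) * a = m → n = 0) :
    Dense (kronSubgroup1 a : Set ℝ) := by
  rcases AddSubgroup.dense_or_cyclic (kronSubgroup1 a) with h | ⟨g, hg⟩
  · exact h
  · exfalso
    have haD : a ∈ kronSubgroup1 a := ⟨1, 0, by simp⟩
    have h1 : (1 : ℝ) ∈ kronSubgroup1 a := ⟨0, 1, by simp⟩
    rw [hg, AddSubgroup.mem_closure_singleton] at haD h1
    obtain ⟨m, hm⟩ := haD
    obtain ⟨k, hk⟩ := h1
    have hk0 : k ≠ 0 := by rintro rfl; simp at hk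
    rw [zsmul_eq_mul] at hm hk
    have : (k : ℝ) * a = (m : ℝ) := by
      calc (k : ℝ) * a = (k : ℝ) * ((m : ℝ) * g) := by rw [hm]
        _ = (m : ℝ) * ((k : ℝ) * g) := by ring
        _ = m := by rw [hk, mul_one]
    exact hk0 (ha k m this)

variable {a b : ℝ}

lemma kron_dense (hab : ∀ P Q R : ℤ, (P : ℝ) * a + (Q : ℝ) * b = (R : ℝ) → P = 0 ∧ Q = 0) :
    Dense (kronSubgroup a b : Set (ℝ × ℝ)) := by
  have ha : ∀ n m : ℤ, (n : ℝ) * a = m → n = 0 := by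
    intro n m h
    exact (hab n 0 m (by push_cast; linarith)).1
  set S := kronSubgroup a b with hS
  set H := S.topologicalClosure with hH
  have hHclosed : IsClosed (H : Set (ℝ × ℝ)) := S.isClosed_topologicalClosure
  have hSH : (S : Set (ℝ × ℝ)) ⊆ (H : Set (ℝ × ℝ)) := S.le_topologicalClosure
  have hHc : (H : Set (ℝ × ℝ)) = closure (S : Set (ℝ × ℝ)) := rfl
  -- it suffices to show H = univ
  suffices huniv : ∀ x : ℝ × ℝ, x ∈ H by
    rw [dense_iff_closure_eq, ← hHc]
    exact Set.eq_univ_of_forall huniv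
  -- Step 1: small nonzero elements of H
  have step1 : ∀ ε > 0, ∃ h : ℝ × ℝ, h ∈ H ∧ h ≠ 0 ∧ ‖h‖ < ε := by
    have hd1 := kronSubgroup1_dense a ha
    -- pick sₖ ∈ S with first coordinate in (0, 1/(k+1)) and second in [0,1)
    have hsel : ∀ k : ℕ, ∃ s : ℝ × ℝ, s ∈ S ∧ 0 < s.1 ∧ s.1 < 1 / (k + 1) ∧
        0 ≤ s.2 ∧ s.2 < 1 := by
      intro k
      have hpos : (0 : ℝ) < 1 / (k + 1) := by positivity
      obtain ⟨x, hx, hx2⟩ := hd1.exists_mem_open isOpen_Ioo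
        (Set.nonempty_Ioo.2 hpos)
      obtain ⟨n, p, rfl⟩ := hx
      refine ⟨((n : ℝ) * a + p, Int.fract ((n : ℝ) * b)), ⟨n, p, -⌊(n : ℝ) * b⌋, ?_⟩,
        hx2.1, hx2.2, Int.fract_nonneg _, Int.fract_lt_one _⟩
      simp [Int.fract, sub_eq_add_neg]
    choose s hsS hs1 hs2 hs3 hs4 using hsel
    -- Bolzano-Weierstrass
    have hbd : ∀ k, s k ∈ (Set.Icc 0 1 ×ˢ Set.Icc 0 1 : Set (ℝ × ℝ)) := by
      intro k
      constructor
      · exact ⟨(hs1 k).le, le_trans (hs2 k).le (by rw [div_le_one (by positivity)]; linarith)⟩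
      · exact ⟨hs3 k, (hs4 k).le⟩
    obtain ⟨L, _, φ, hφ, hLim⟩ := (IsCompact.prod isCompact_Icc isCompact_Icc).tendsto_subseq hbd
    have hLH : L ∈ H := hHclosed.mem_of_tendsto hLim
      (Filter.Eventually.of_forall fun k => hSH (hsS (φ k)))
    have hL1 : L.1 = 0 := by
      have h1 : Filter.Tendsto (fun k => (s (φ k)).1) Filter.atTop (nhds L.1) :=
        (continuous_fst.tendsto L).comp hLim
      have h2 : Filter.Tendsto (fun k => (s (φ k)).1) Filter.atTop (nhds 0) := by
        apply squeeze_zero (fun k => (hs1 (φ k)).le) (fun k => ?_)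
          tendsto_one_div_add_atTop_nhds_zero_nat
        calc (s (φ k)).1 ≤ 1 / (φ k + 1) := (hs2 (φ k)).le
          _ ≤ 1 / (k + 1) := by
              apply div_le_div_of_nonneg_left one_pos.le (by positivity)
              have : (k : ℝ) ≤ (φ k : ℝ) := by exact_mod_cast hφ.le_apply
              linarith
      exact tendsto_nhds_unique h1 h2
    intro ε hε
    have hconv : Filter.Tendsto (fun k => s (φ k) - L) Filter.atTop (nhds 0) := by
      have := hLim.sub (tendsto_const_nhds : Filter.Tendsto (fun _ : ℕ => L) Filter.atTop (nhds L))
      simpa using this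
    obtain ⟨K, hK⟩ := Metric.tendsto_atTop.1 hconv ε hε
    have hk := hK K le_rfl
    rw [dist_zero_right] at hk
    refine ⟨s (φ K) - L, H.sub_mem (hSH (hsS (φ K))) hLH, ?_, hk⟩
    intro h0
    have h1 : (s (φ K)).1 = L.1 := by
      have := congrArg Prod.fst h0
      simpa [sub_eq_zero] using this
    rw [hL1] at h1
    exact absurd h1 (ne_of_gt (hs1 (φ K)))
  -- Step 2: a whole line is inside H
  obtain ⟨u, hu0, hline⟩ : ∃ u : ℝ × ℝ, u ≠ 0 ∧ ∀ t : ℝ, t • u ∈ H := by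
    have hsel : ∀ k : ℕ, ∃ h : ℝ × ℝ, h ∈ H ∧ h ≠ 0 ∧ ‖h‖ < 1 / (k + 1) :=
      fun k => step1 _ (by positivity)
    choose h hhH hh0 hhs using hsel
    set uu : ℕ → ℝ × ℝ := fun k => ‖h k‖⁻¹ • h k with huu
    have hnorm : ∀ k, ‖h k‖ > 0 := fun k => norm_pos_iff.2 (hh0 k)
    have huusph : ∀ k, uu k ∈ Metric.sphere (0 : ℝ × ℝ) 1 := by
      intro k
      simp only [Metric.mem_sphere, dist_zero_right, huu, norm_smul, norm_inv, norm_norm]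
      exact inv_mul_cancel₀ (hnorm k).ne'
    obtain ⟨u, husph, φ, hφ, hLim⟩ := (isCompact_sphere (0 : ℝ × ℝ) 1).tendsto_subseq huusph
    have hu0 : u ≠ 0 := by
      intro h0
      rw [h0] at husph
      simp at husph
    refine ⟨u, hu0, fun t => ?_⟩
    -- t • u = lim of ⌊t/‖h⌋‖⌋ • h (φ k)
    set c : ℕ → ℝ := fun k => (⌊t / ‖h (φ k)‖⌋ : ℝ) * ‖h (φ k)‖ with hc
    have hmem : ∀ k, c k • uu (φ k) ∈ H := by
      intro k
      have heq : c k • uu (φ k) = (⌊t / ‖h (φ k)‖⌋ : ℤ) • h (φ k) := by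
        rw [← Int.cast_smul_eq_zsmul ℝ, huu, smul_smul, hc]
        congr 1
        field_simp
        exact mul_div_cancel_left₀ _ (hnorm (φ k)).ne'
      rw [heq]
      exact H.zsmul_mem (hhH (φ k)) _
    have hnormlim : Filter.Tendsto (fun k => ‖h (φ k)‖) Filter.atTop (nhds 0) := by
      apply squeeze_zero (fun k => (hnorm (φ k)).le) (fun k => ?_)
        tendsto_one_div_add_atTop_nhds_zero_nat
      calc ‖h (φ k)‖ ≤ 1 / (φ k + 1) := (hhs (φ k)).le
        _ ≤ 1 / (k + 1) := by
            apply div_le_div_of_nonneg_left one_pos.le (by positivity)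
            have : (k : ℝ) ≤ (φ k : ℝ) := by exact_mod_cast hφ.le_apply
            linarith
    have hclim : Filter.Tendsto c Filter.atTop (nhds t) := by
      rw [Metric.tendsto_atTop]
      intro ε hε
      obtain ⟨N, hN⟩ := Metric.tendsto_atTop.1 hnormlim ε hε
      refine ⟨N, fun k hk => ?_⟩
      have h1 := Int.floor_le (t / ‖h (φ k)‖)
      have h2 := Int.lt_floor_add_one (t / ‖h (φ k)‖)
      have hpos := hnorm (φ k)
      have e1 : c k ≤ t := by
        have := mul_le_mul_of_nonneg_right h1 hpos.le
        rw [div_mul_cancel₀ _ hpos.ne'] at this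
        simpa [hc] using this
      have e2 : t < c k + ‖h (φ k)‖ := by
        have := mul_lt_mul_of_pos_right h2 hpos
        rw [div_mul_cancel₀ _ hpos.ne'] at this
        simp only [hc]
        nlinarith
      have hNk := hN k hk
      rw [Real.dist_eq, abs_sub_lt_iff] at hNk ⊢
      simp only [sub_zero] at hNk
      constructor
      · linarith [abs_nonneg (‖h (φ k)‖), le_abs_self (‖h (φ k)‖)]
      · linarith [le_abs_self (‖h (φ k)‖)]
    have : Filter.Tendsto (fun k => c k • uu (φ k)) Filter.atTop (nhds (t • u)) :=
      hclim.smul hLim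
    exact hHclosed.mem_of_tendsto this (Filter.Eventually.of_forall hmem)
  -- Step 3: the functional λ(w) = u.2 w.1 - u.1 w.2
  set lam : ℝ × ℝ →+ ℝ := AddMonoidHom.mk' (fun w => u.2 * w.1 - u.1 * w.2)
    (by intro x y; simp [Prod.fst_add, Prod.snd_add]; ring) with hlam
  have hlam_apply : ∀ w : ℝ × ℝ, lam w = u.2 * w.1 - u.1 * w.2 := fun w => rfl
  set LL := H.map lam with hLL
  have habH : ((a, b) : ℝ × ℝ) ∈ H := hSH ⟨1, 0, 0, by simp⟩
  have h10H : ((1, 0) : ℝ × ℝ) ∈ H := hSH ⟨0, 1, 0, by simp⟩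
  have h01H : ((0, 1) : ℝ × ℝ) ∈ H := hSH ⟨0, 0, 1, by simp⟩
  rcases AddSubgroup.dense_or_cyclic LL with hdense | ⟨g, hg⟩
  · -- dense case: H = univ
    intro x
    set N : ℝ := u.1 ^ 2 + u.2 ^ 2 with hN
    have hNpos : 0 < N := by
      have h' : u.1 ≠ 0 ∨ u.2 ≠ 0 := by
        by_contra hcon
        push_neg at hcon
        exact hu0 (Prod.ext_iff.2 ⟨by simpa using hcon.1, by simpa using hcon.2⟩)
      rcases h' with h | h <;> positivity
    suffices hx : x ∈ closure (H : Set (ℝ × ℝ)) by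
      rwa [hHclosed.closure_eq] at hx
    rw [Metric.mem_closure_iff]
    intro ε hε
    -- find y ∈ LL close to lam x
    have hsmall : 0 < ε * N / (‖u‖ + 1) := by positivity
    obtain ⟨y, hyL, hyd⟩ := Metric.mem_closure_iff.1 (hdense (lam x)) _ hsmall
    obtain ⟨hh, hhH2, rfl⟩ := hyL
    set cc : ℝ := (u.1 * (x - hh).1 + u.2 * (x - hh).2) / N with hcc
    set dd : ℝ := (lam x - lam hh) / N with hdd
    refine ⟨hh + cc • u, H.add_mem hhH2 (hline cc), ?_⟩
    have hdecomp : x - (hh + cc • u) = dd • (u.2, -u.1) := by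
      have h1 : (x - hh).1 - cc * u.1 = dd * u.2 := by
        rw [hcc, hdd, hlam_apply, hlam_apply]
        have : lam x - lam hh = u.2 * (x - hh).1 - u.1 * (x - hh).2 := by
          rw [hlam_apply, hlam_apply]
          simp [Prod.fst_sub, Prod.snd_sub]
          ring
        field_simp
        rw [hN]; simp only [Prod.fst_sub, Prod.snd_sub]; ring
      have h2 : (x - hh).2 - cc * u.2 = dd * (-u.1) := by
        rw [hcc, hdd, hlam_apply, hlam_apply]
        field_simp
        rw [hN]; simp only [Prod.fst_sub, Prod.snd_sub]; ring
      apply Prod.ext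
      · simpa [Prod.smul_mk, smul_eq_mul, sub_add_eq_sub_sub] using h1
      · simpa [Prod.smul_mk, smul_eq_mul, sub_add_eq_sub_sub] using h2
    rw [dist_eq_norm, hdecomp, norm_smul]
    have hdbound : |dd| < ε / (‖u‖ + 1) := by
      rw [hdd, abs_div, abs_of_pos hNpos, div_lt_iff₀ hNpos]
      have : |lam x - lam hh| = dist (lam x) (lam hh) := by rw [Real.dist_eq]
      rw [this]
      calc dist (lam x) (lam hh) < ε * N / (‖u‖ + 1) := hyd
        _ = ε / (‖u‖ + 1) * N := by ring
    have hvnorm : ‖((u.2, -u.1) : ℝ × ℝ)‖ ≤ ‖u‖ := by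
      rw [Prod.norm_def, Prod.norm_def]
      simp only [norm_neg, Real.norm_eq_abs]
      exact max_le (le_max_right _ _) (le_max_left _ _)
    calc ‖dd‖ * ‖((u.2, -u.1) : ℝ × ℝ)‖ ≤ |dd| * ‖u‖ := by
          rw [Real.norm_eq_abs]
          exact mul_le_mul_of_nonneg_left hvnorm (abs_nonneg _)
      _ < ε / (‖u‖ + 1) * (‖u‖ + 1) := by
          apply mul_lt_mul' hdbound.le (by linarith [norm_nonneg u]) (norm_nonneg u)
          positivity
      _ = ε := by field_simp
  · -- cyclic case: contradiction
    exfalso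
    have m1 : u.2 ∈ LL := ⟨(1, 0), h10H, by rw [hlam_apply]; ring⟩
    have m2 : -u.1 ∈ LL := ⟨(0, 1), h01H, by rw [hlam_apply]; ring⟩
    have m3 : u.2 * a - u.1 * b ∈ LL := ⟨(a, b), habH, by rw [hlam_apply]⟩
    rw [hg, AddSubgroup.mem_closure_singleton] at m1 m2 m3
    obtain ⟨P, hP⟩ := m1
    obtain ⟨Q, hQ⟩ := m2
    obtain ⟨R, hR⟩ := m3
    rcases eq_or_ne g 0 with rfl | hgne
    · simp only [smul_zero] at hP hQ
      refine hu0 (Prod.ext_iff.2 ⟨?_, ?_⟩)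
      · simpa using neg_eq_zero.mp hQ.symm
      · simpa using hP.symm
    · have hrel : ((P : ℝ) * a + (Q : ℝ) * b) * g = (R : ℝ) * g := by
        rw [zsmul_eq_mul] at hP hQ hR
        have : (P : ℝ) * g * a + (Q : ℝ) * g * b = (R : ℝ) * g := by
          rw [hP, hQ, hR]; ring
        linarith [this]
      have hrel2 : (P : ℝ) * a + (Q : ℝ) * b = (R : ℝ) :=
        mul_right_cancel₀ hgne hrel
      obtain ⟨hP0, hQ0⟩ := hab P Q R hrel2
      refine hu0 (Prod.ext_iff.2 ⟨?_, ?_⟩)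
      · have h' : -u.1 = 0 := by rw [← hQ, hQ0, zero_zsmul]
        simpa using neg_eq_zero.mp h'
      · have h' : u.2 = 0 := by rw [← hP, hP0, zero_zsmul]
        simpa using h'

end Kronecker

/-- The values ρ̂(n) at even integers n are dense in the closed unit disk. -/
theorem fourier_range_even_dense_in_disk (α β : ℝ)
    (hα : α ∈ Set.Ioo (0 : ℝ) (2 * π)) (hβ : β ∈ Set.Ioo (0 : ℝ) (2 * π))
    (hind : LinearIndependent ℚ ![α, β, π]) :
    closure {w : ℂ | ∃ n : ℤ,
        w = (Complex.exp (-(((2 * n : ℤ) : ℂ) * (α : ℂ)) * Complex.I) +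
             Complex.exp (-(((2 * n : ℤ) : ℂ) * (β : ℂ)) * Complex.I)) / 2} =
      Metric.closedBall (0 : ℂ) 1 := by
  have hπ : (0 : ℝ) < π := Real.pi_pos
  -- consequence of linear independence
  have hab : ∀ P Q R : ℤ, (P : ℝ) * (α / π) + (Q : ℝ) * (β / π) = (R : ℝ) → P = 0 ∧ Q = 0 := by
    intro P Q R h
    have h' : (P : ℝ) * α + (Q : ℝ) * β + (-R : ℝ) * π = 0 := by
      field_simp at h
      linarith
    have hsum : ∑ i, (![(P : ℚ), (Q : ℚ), (-R : ℚ)]) i • (![α, β, π]) i = 0 := by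
      simp only [Fin.sum_univ_three, Matrix.cons_val_zero, Matrix.cons_val_one, Matrix.head_cons,
        Matrix.cons_val_two, Matrix.tail_cons, Rat.smul_def]
      push_cast
      linarith
    have hz := Fintype.linearIndependent_iff.1 hind _ hsum
    have hP := hz 0
    have hQ := hz 1
    simp only [Matrix.cons_val_zero, Matrix.cons_val_one, Matrix.head_cons] at hP hQ
    exact ⟨by exact_mod_cast hP, by exact_mod_cast hQ⟩
  set a := α / π with haa
  set b := β / π with hbb
  have hdense := kron_dense hab
  set F : ℝ × ℝ → ℂ := fun w =>
    (Complex.exp (((-(2 * π * w.1) : ℝ) : ℂ) * Complex.I) +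
     Complex.exp (((-(2 * π * w.2) : ℝ) : ℂ) * Complex.I)) / 2 with hF
  have hFcont : Continuous F := by fun_prop
  -- the key exponential computation
  have hexp : ∀ (γ : ℝ) (n p : ℤ),
      Complex.exp (((-(2 * π * ((n : ℝ) * (γ / π) + p)) : ℝ) : ℂ) * Complex.I)
        = Complex.exp (-(((2 * n : ℤ) : ℂ) * (γ : ℂ)) * Complex.I) := by
    intro γ n p
    have hπC : (π : ℂ) ≠ 0 := by exact_mod_cast Real.pi_ne_zero
    have hsplit : ((-(2 * π * ((n : ℝ) * (γ / π) + p)) : ℝ) : ℂ) * Complex.I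
        = -(((2 * n : ℤ) : ℂ) * (γ : ℂ)) * Complex.I + ((-p : ℤ) : ℂ) * (2 * π * Complex.I) := by
      push_cast
      field_simp
      ring
    rw [hsplit, Complex.exp_add, Complex.exp_int_mul_two_pi_mul_I, mul_one]
  -- the set in question is the image of the subgroup
  have hTS : {w : ℂ | ∃ n : ℤ,
        w = (Complex.exp (-(((2 * n : ℤ) : ℂ) * (α : ℂ)) * Complex.I) +
             Complex.exp (-(((2 * n : ℤ) : ℂ) * (β : ℂ)) * Complex.I)) / 2}
      = F '' (kronSubgroup a b : Set (ℝ × ℝ)) := by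
    ext w
    constructor
    · rintro ⟨n, rfl⟩
      refine ⟨((n : ℝ) * a + ((0 : ℤ) : ℝ), (n : ℝ) * b + ((0 : ℤ) : ℝ)), ⟨n, 0, 0, rfl⟩, ?_⟩
      simp only [hF, haa, hbb]
      rw [hexp α n 0, hexp β n 0]
    · rintro ⟨w', ⟨n, p, q, rfl⟩, rfl⟩
      refine ⟨n, ?_⟩
      simp only [hF, haa, hbb]
      rw [hexp α n p, hexp β n q]
  -- the range of F is the closed unit disk
  have hrange : Set.range F = Metric.closedBall (0 : ℂ) 1 := by
    apply Set.eq_of_subset_of_subset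
    · rintro _ ⟨w, rfl⟩
      rw [Metric.mem_closedBall, dist_zero_right]
      simp only [hF]
      calc ‖(Complex.exp (((-(2 * π * w.1) : ℝ) : ℂ) * Complex.I) +
            Complex.exp (((-(2 * π * w.2) : ℝ) : ℂ) * Complex.I)) / 2‖
          = ‖Complex.exp (((-(2 * π * w.1) : ℝ) : ℂ) * Complex.I) +
            Complex.exp (((-(2 * π * w.2) : ℝ) : ℂ) * Complex.I)‖ / 2 := by
            rw [norm_div]; norm_num
        _ ≤ (‖Complex.exp (((-(2 * π * w.1) : ℝ) : ℂ) * Complex.I)‖ +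
            ‖Complex.exp (((-(2 * π * w.2) : ℝ) : ℂ) * Complex.I)‖) / 2 := by
            gcongr
            exact norm_add_le _ _
        _ = 1 := by
            rw [Complex.norm_exp_ofReal_mul_I, Complex.norm_exp_ofReal_mul_I]
            norm_num
    · intro w hw
      rw [Metric.mem_closedBall, dist_zero_right] at hw
      set θ := Complex.arg w with hθ
      set ψ := Real.arccos ‖w‖ with hψ
      refine ⟨(-(θ + ψ) / (2 * π), -(θ - ψ) / (2 * π)), ?_⟩
      have h1 : (-(2 * π * (-(θ + ψ) / (2 * π))) : ℝ) = θ + ψ := by field_simp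
      have h2 : (-(2 * π * (-(θ - ψ) / (2 * π))) : ℝ) = θ - ψ := by field_simp
      simp only [hF]
      rw [h1, h2]
      have hsum : Complex.exp (((θ + ψ : ℝ) : ℂ) * Complex.I) +
          Complex.exp (((θ - ψ : ℝ) : ℂ) * Complex.I)
          = Complex.exp ((θ : ℂ) * Complex.I) * (2 * Complex.cos (ψ : ℂ)) := by
        rw [Complex.two_cos]
        push_cast
        rw [add_mul, sub_mul, Complex.exp_add, sub_eq_add_neg, Complex.exp_add]
        ring_nf
      rw [hsum]
      have hcos : Complex.cos (ψ : ℂ) = ((‖w‖ : ℝ) : ℂ) := by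
        rw [← Complex.ofReal_cos, hψ,
          Real.cos_arccos (by linarith [norm_nonneg w]) (by
            exact hw)]
      rw [hcos]
      have habs := Complex.norm_mul_exp_arg_mul_I w
      rw [← hθ] at habs
      calc Complex.exp ((θ : ℂ) * Complex.I) * (2 * ((‖w‖ : ℝ) : ℂ)) / 2
          = ((‖w‖ : ℝ) : ℂ) * Complex.exp ((θ : ℂ) * Complex.I) := by ring
        _ = w := habs
  -- put everything together
  apply Set.eq_of_subset_of_subset
  · apply closure_minimal
    · rw [hTS, ← hrange]
      exact Set.image_subset_range F _
    · exact Metric.isClosed_closedBall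
  · rw [hTS]
    have h1 : F '' closure (kronSubgroup a b : Set (ℝ × ℝ)) ⊆
        closure (F '' (kronSubgroup a b : Set (ℝ × ℝ))) :=
      image_closure_subset_closure_image hFcont
    rw [hdense.closure_eq] at h1
    rw [← hrange]
    intro z hz
    obtain ⟨w, rfl⟩ := hz
    exact h1 ⟨w, trivial, rfl⟩
end

section
/- Let α, β ∈ (0, 2π) with α, β, π linearly independent over ℚ, and set ρ̂(n) = (e^{−inα} + e^{−inβ})/2. Then the closure of {ρ̂(n) : n ∈ 2ℤ+1} (values at odd integers) equals the closed unit disk. -/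
open Complex Real Filter

private def Gsub (a b : ℝ) : AddSubgroup (ℝ × ℝ) :=
  AddSubgroup.closure {(a,b), (1,0), (0,1)}

private def Esub (a b : ℝ) : AddSubgroup (ℝ × ℝ) where
  carrier := {v | ∃ n m k : ℤ, v = ((n:ℝ)*a+(m:ℝ), (n:ℝ)*b+(k:ℝ))}
  add_mem' := by
    rintro x y ⟨n,m,k,rfl⟩ ⟨n',m',k',rfl⟩
    exact ⟨n+n', m+m', k+k', by refine Prod.ext ?_ ?_ <;> simp <;> push_cast <;> ring⟩
  zero_mem' := ⟨0, 0, 0, by simp; rfl⟩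
  neg_mem' := by
    rintro x ⟨n,m,k,rfl⟩
    exact ⟨-n, -m, -k, by refine Prod.ext ?_ ?_ <;> simp <;> push_cast <;> ring⟩


section
variable {a b : ℝ} (h : ∀ p q r : ℤ, (p:ℝ)*a + (q:ℝ)*b + (r:ℝ) = 0 → p = 0 ∧ q = 0)


lemma mem_G (n m k : ℤ) : ((n*a+m, n*b+k) : ℝ×ℝ) ∈ Gsub a b := by
  have h1 : ((a,b) : ℝ×ℝ) ∈ Gsub a b := AddSubgroup.subset_closure (by simp)
  have h2 : ((1,0) : ℝ×ℝ) ∈ Gsub a b := AddSubgroup.subset_closure (by simp)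
  have h3 : ((0,1) : ℝ×ℝ) ∈ Gsub a b := AddSubgroup.subset_closure (by simp)
  have : ((n*a+m, n*b+k) : ℝ×ℝ) = n • ((a,b):ℝ×ℝ) + m • ((1,0):ℝ×ℝ) + k • ((0,1):ℝ×ℝ) := by
    refine Prod.ext ?_ ?_ <;> simp [Prod.smul_def] <;> ring
  rw [this]
  exact AddSubgroup.add_mem _ (AddSubgroup.add_mem _ (AddSubgroup.zsmul_mem _ h1 n)
    (AddSubgroup.zsmul_mem _ h2 m)) (AddSubgroup.zsmul_mem _ h3 k)

include h in
lemma stepA : ∀ ε > 0, ∃ g ∈ Gsub a b, g ≠ 0 ∧ ‖g‖ < ε := by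
  intro ε hε
  set p : ℕ → ℝ × ℝ := fun n => (Int.fract (n * a), Int.fract (n * b)) with hp
  have hpmem : ∀ n : ℕ, p n ∈ Gsub a b := by
    intro n
    have : p n = ((n : ℤ) * a + (-⌊(n:ℝ)*a⌋ : ℤ), (n:ℤ) * b + (-⌊(n:ℝ)*b⌋ : ℤ)) := by
      refine Prod.ext ?_ ?_ <;> simp [hp] <;> push_cast <;> rw [Int.fract] <;> push_cast <;> ring
    rw [this]; exact mem_G _ _ _
  have hinj : Function.Injective p := by
    intro n m hnm
    have h1 : Int.fract ((n:ℝ) * a) = Int.fract ((m:ℝ) * a) := congrArg Prod.fst hnm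
    rw [Int.fract_eq_fract] at h1
    obtain ⟨z, hz⟩ := h1
    have : ((n:ℤ) - m : ℝ) * a + (0:ℝ)*b + ((-z : ℤ):ℝ) = 0 := by push_cast; push_cast at hz; linarith
    have := (h ((n:ℤ)-m) 0 (-z) (by push_cast at this ⊢; linarith)).1
    omega
  have hK : IsCompact (Set.Icc (0:ℝ) 1 ×ˢ Set.Icc (0:ℝ) 1) :=
    (isCompact_Icc).prod isCompact_Icc
  have hmemK : ∀ n, p n ∈ Set.Icc (0:ℝ) 1 ×ˢ Set.Icc (0:ℝ) 1 := by
    intro n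
    constructor <;> exact ⟨(Int.fract_nonneg _), le_of_lt (Int.fract_lt_one _)⟩
  obtain ⟨x, -, φ, hφ, hlim⟩ := hK.tendsto_subseq hmemK
  have hcauchy := hlim.cauchySeq
  rw [Metric.cauchySeq_iff] at hcauchy
  obtain ⟨N, hN⟩ := hcauchy ε hε
  refine ⟨p (φ (N+1)) - p (φ N), AddSubgroup.sub_mem _ (hpmem _) (hpmem _), ?_, ?_⟩
  · intro hc
    have : p (φ (N+1)) = p (φ N) := by
      have := sub_eq_zero.mp hc; exact this
    exact absurd (hφ.injective (hinj this)) (by omega)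
  · have := hN (N+1) (by omega) N le_rfl
    rwa [dist_eq_norm] at this
end


lemma stepB {G : AddSubgroup (ℝ × ℝ)} (hA : ∀ ε > 0, ∃ g ∈ G, g ≠ 0 ∧ ‖g‖ < ε) :
    ∃ u : ℝ × ℝ, ‖u‖ = 1 ∧ ∀ t : ℝ, t • u ∈ closure (G : Set (ℝ × ℝ)) := by
  have hg : ∀ k : ℕ, ∃ g, g ∈ G ∧ g ≠ 0 ∧ ‖g‖ < 1/(k+1) := by
    intro k
    obtain ⟨g, h1, h2, h3⟩ := hA (1/(k+1)) (by positivity)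
    exact ⟨g, h1, h2, h3⟩
  choose g hgG hg0 hgs using hg
  set u : ℕ → ℝ × ℝ := fun k => ‖g k‖⁻¹ • g k with hu
  have hnorm : ∀ k, ‖g k‖ ≠ 0 := fun k => norm_ne_zero_iff.2 (hg0 k)
  have humem : ∀ k, u k ∈ Metric.sphere (0 : ℝ × ℝ) 1 := by
    intro k
    simp only [Metric.mem_sphere, dist_zero_right, hu, norm_smul, norm_inv, norm_norm]
    rw [inv_mul_cancel₀ (hnorm k)]
  obtain ⟨v, hvmem, φ, hφ, hlim⟩ := (isCompact_sphere (0:ℝ×ℝ) 1).tendsto_subseq humem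
  refine ⟨v, by simpa using hvmem, fun t => ?_⟩
  set r : ℕ → ℝ := fun j => ‖g (φ j)‖ with hr
  set c : ℕ → ℝ := fun j => (⌊t / r j⌋ : ℝ) * r j with hc
  set z : ℕ → ℝ × ℝ := fun j => ⌊t / r j⌋ • g (φ j) with hz
  have hzG : ∀ j, z j ∈ (G : Set (ℝ × ℝ)) := fun j => AddSubgroup.zsmul_mem _ (hgG _) _
  have hzeq : ∀ j, z j = (c j) • u (φ j) := by
    intro j
    simp only [hz, hc, hu, smul_smul, ← Int.cast_smul_eq_zsmul (R := ℝ)]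
    rw [mul_assoc, mul_inv_cancel₀ (hnorm (φ j)), mul_one]
  have hrto : Tendsto r atTop (nhds 0) := by
    apply squeeze_zero (fun j => norm_nonneg _) (g := fun j : ℕ => 1/(j+1))
    · intro j
      exact le_trans (hgs (φ j)).le (by
        apply one_div_le_one_div_of_le (by positivity)
        have : j ≤ φ j := hφ.le_apply
        have h2 : (j:ℝ) ≤ (φ j : ℝ) := Nat.cast_le.mpr this
        linarith)
    · exact tendsto_one_div_add_atTop_nhds_zero_nat
  have hcto : Tendsto c atTop (nhds t) := by
    have h1 : Tendsto (fun j => c j - t) atTop (nhds 0) := by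
      refine squeeze_zero_norm (fun j => ?_) hrto
      have hrpos : 0 < r j := (norm_nonneg _).lt_of_ne (Ne.symm (hnorm _))
      have h2 : (⌊t / r j⌋ : ℝ) ≤ t / r j := Int.floor_le _
      have h3 : t / r j < ⌊t / r j⌋ + 1 := Int.lt_floor_add_one _
      rw [Real.norm_eq_abs, abs_le]
      have h4 := (le_div_iff₀ hrpos).mp h2
      have h5 := (div_lt_iff₀ hrpos).mp h3
      constructor <;> simp only [hc] <;> nlinarith
    have := h1.add_const t
    simpa using this
  have hlimz : Tendsto z atTop (nhds (t • v)) := by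
    simp only [funext hzeq]
    exact hcto.smul hlim
  exact mem_closure_of_tendsto hlimz (Eventually.of_forall hzG)



lemma kron (a b : ℝ)
    (h : ∀ p q r : ℤ, (p:ℝ)*a + (q:ℝ)*b + (r:ℝ) = 0 → p = 0 ∧ q = 0)
    (hA : ∀ ε > 0, ∃ g ∈ Gsub a b, g ≠ 0 ∧ ‖g‖ < ε)
    (hB : ∀ {G : AddSubgroup (ℝ × ℝ)}, (∀ ε > 0, ∃ g ∈ G, g ≠ 0 ∧ ‖g‖ < ε) →
      ∃ u : ℝ × ℝ, ‖u‖ = 1 ∧ ∀ t : ℝ, t • u ∈ closure (G : Set (ℝ × ℝ)))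
    : Dense ((Gsub a b : Set (ℝ × ℝ))) := by
  obtain ⟨u, hunorm, hline⟩ := hB hA
  have hu0 : u ≠ 0 := by intro hc; rw [hc] at hunorm; simp at hunorm
  have huc : u.1 ≠ 0 ∨ u.2 ≠ 0 := by
    by_contra hc; push_neg at hc
    exact hu0 (Prod.ext hc.1 hc.2)
  have hρ : 0 < u.1^2 + u.2^2 := by
    rcases huc with h1 | h1 <;> positivity
  set ρ := u.1^2 + u.2^2 with hρdef
  set f : (ℝ × ℝ) →+ ℝ := AddMonoidHom.mk' (fun v => u.1 * v.2 - u.2 * v.1)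
    (by intro x y; simp [Prod.fst_add, Prod.snd_add]; ring) with hf
  set H := (Gsub a b).topologicalClosure with hH
  have hHcoe : (H : Set (ℝ × ℝ)) = closure (Gsub a b : Set (ℝ × ℝ)) := rfl
  set J := AddSubgroup.map f H with hJ
  have memG : ∀ (x : ℝ × ℝ), x ∈ ({((a,b) : ℝ×ℝ), (1,0), (0,1)} : Set (ℝ×ℝ)) → x ∈ Gsub a b :=
    fun x hx => AddSubgroup.subset_closure hx
  have memH : ∀ (x : ℝ × ℝ), x ∈ Gsub a b → x ∈ H :=
    fun x hx => (Gsub a b).le_topologicalClosure hx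
  rcases AddSubgroup.dense_or_cyclic J with hd | ⟨c, hc⟩
  · -- dense case
    rw [← dense_closure, ← hHcoe]
    rw [Metric.dense_iff]
    intro x ε hε
    have hw : (0:ℝ) < ‖((-u.2, u.1) : ℝ × ℝ)‖ + 1 := by positivity
    set w : ℝ × ℝ := (-u.2, u.1) with hwdef
    have hδ : (0:ℝ) < ε * ρ / (‖w‖ + 1) := by positivity
    obtain ⟨y, hy1, hy2⟩ := (Metric.dense_iff.mp hd) (f x) _ hδ
    obtain ⟨hh, hhH, hhy⟩ := hy2
    set d : ℝ × ℝ := hh - x with hd2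
    set s : ℝ := f d / ρ with hs
    set tc : ℝ := (u.1 * d.1 + u.2 * d.2) / ρ with htc
    have hdecomp : d = s • w + tc • u := by
      have : ρ ≠ 0 := ne_of_gt hρ
      refine Prod.ext ?_ ?_ <;>
        simp only [Prod.fst_add, Prod.snd_add, Prod.smul_fst, Prod.smul_snd, smul_eq_mul,
          hs, htc, hwdef, hf, AddMonoidHom.mk'_apply] <;>
        field_simp <;> ring
    have hpH : x + s • w ∈ H := by
      have h1 : hh - tc • u ∈ H := by
        refine AddSubgroup.sub_mem _ hhH ?_
        rw [← SetLike.mem_coe, hHcoe]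
        exact hline tc
      have h2 : x + s • w = hh - tc • u := by
        have h3 := hdecomp
        rw [hd2, sub_eq_iff_eq_add] at h3
        rw [h3]; abel
      rw [h2]; exact h1
    refine ⟨x + s • w, ?_, hpH⟩
    have : dist (x + s • w) x = ‖s • w‖ := by
      rw [dist_eq_norm]; congr 1; abel
    rw [Metric.mem_ball, this, norm_smul]
    have hfd : f d = y - f x := by rw [hd2, map_sub, hhy]
    have hyd : |y - f x| < ε * ρ / (‖w‖ + 1) := by
      have h5 := hy1; rw [Metric.mem_ball, Real.dist_eq] at h5
      exact h5
    have h3 : |s| < ε / (‖w‖ + 1) := by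
      rw [hs, hfd, abs_div, abs_of_pos hρ, div_lt_div_iff₀ hρ hw]
      calc |y - f x| * (‖w‖ + 1) < (ε * ρ / (‖w‖ + 1)) * (‖w‖ + 1) :=
            mul_lt_mul_of_pos_right hyd hw
        _ = ε * ρ := div_mul_cancel₀ _ (ne_of_gt hw)
    calc ‖s‖ * ‖w‖ < (ε / (‖w‖ + 1)) * (‖w‖ + 1) := by
          apply mul_lt_mul'' ?_ (lt_add_one _) (norm_nonneg _) (norm_nonneg _)
          rw [Real.norm_eq_abs]; exact h3
      _ = ε := by field_simp
  · -- cyclic case: contradiction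
    exfalso
    have hmem : ∀ v : ℝ × ℝ, v ∈ Gsub a b → ∃ n : ℤ, n • c = f v := by
      intro v hv
      have : f v ∈ J := ⟨v, memH v hv, rfl⟩
      rw [hc, AddSubgroup.mem_closure_singleton] at this
      exact this
    obtain ⟨p, hp⟩ := hmem (1,0) (memG _ (by simp))
    obtain ⟨q, hq⟩ := hmem (0,1) (memG _ (by simp))
    obtain ⟨r, hr⟩ := hmem (a,b) (memG _ (by simp))
    simp only [hf, AddMonoidHom.mk'_apply, zsmul_eq_mul] at hp hq hr
    have hc0 : c ≠ 0 := by
      intro hc0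
      rw [hc0, mul_zero] at hp hq
      rcases huc with h1 | h1
      · exact h1 (by linarith)
      · exact h1 (by linarith)
    have hrel : (p:ℝ) * a + (q:ℝ) * b + ((-r : ℤ):ℝ) = 0 := by
      have : c * ((p:ℝ) * a + (q:ℝ) * b + ((-r:ℤ):ℝ)) = 0 := by
        push_cast
        linear_combination a * hp + b * hq - hr
      rcases mul_eq_zero.mp this with h1 | h1
      · exact absurd h1 hc0
      · exact h1
    obtain ⟨hp0, hq0⟩ := h p q (-r) hrel
    rw [hp0] at hp; rw [hq0] at hq
    simp at hp hq
    rcases huc with h1 | h1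
    · exact h1 (by linarith)
    · exact h1 (by linarith)



lemma exp_close (x y : ℝ) (h1 : |x - y| ≤ 1) :
    ‖Complex.exp (x*I) - Complex.exp (y*I)‖ ≤ 2*|x-y| := by
  have he : Complex.exp (x*I) = Complex.exp (y*I) * Complex.exp ((↑(x-y))*I) := by
    rw [← Complex.exp_add]
    congr 1
    push_cast
    ring
  rw [he, ← mul_sub_one, norm_mul, Complex.norm_exp_ofReal_mul_I, one_mul]
  have h2 : ‖((↑(x-y))*I)‖ ≤ 1 := by
    rw [norm_mul, Complex.norm_I, mul_one, Complex.norm_real, Real.norm_eq_abs]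
    exact h1
  have h3 := Complex.norm_exp_sub_one_le h2
  rw [norm_mul, Complex.norm_I, mul_one, Complex.norm_real, Real.norm_eq_abs] at h3
  exact h3

lemma disk_surj (w : ℂ) (hw : ‖w‖ ≤ 1) :
    ∃ θ φ : ℝ, w = (Complex.exp (θ*I) + Complex.exp (φ*I))/2 := by
  set δ := Real.arccos ‖w‖ with hδ
  refine ⟨w.arg + δ, w.arg - δ, ?_⟩
  have key : Complex.exp (↑(w.arg + δ)*I) + Complex.exp (↑(w.arg - δ)*I)
      = Complex.exp (↑w.arg*I) * (2 * Complex.cos δ) := by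
    rw [Complex.two_cos, mul_add, ← Complex.exp_add, ← Complex.exp_add]
    push_cast
    ring_nf
  rw [key]
  rw [← Complex.ofReal_cos, hδ, Real.cos_arccos (by linarith [norm_nonneg w]) hw]
  rw [show Complex.exp (↑w.arg*I) * (2*(↑(‖w‖) : ℂ)) / 2
      = ↑(‖w‖) * Complex.exp (↑w.arg*I) by ring,
    Complex.norm_mul_exp_arg_mul_I]


private lemma dense_E (a b : ℝ)
    (h : ∀ p q r : ℤ, (p:ℝ)*a + (q:ℝ)*b + (r:ℝ) = 0 → p = 0 ∧ q = 0) :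
    Dense ((Esub a b : Set (ℝ × ℝ))) := by
  have hd : Dense ((Gsub a b : Set (ℝ × ℝ))) :=
    kron a b h (stepA h) (fun {G} hA => stepB hA)
  refine hd.mono ?_
  rw [Gsub]
  rw [show ((AddSubgroup.closure {((a,b):ℝ×ℝ), (1,0), (0,1)} : AddSubgroup (ℝ×ℝ)) : Set (ℝ×ℝ))
      ⊆ (Esub a b : Set (ℝ×ℝ)) ↔
      AddSubgroup.closure {((a,b):ℝ×ℝ), (1,0), (0,1)} ≤ Esub a b from Iff.rfl]
  rw [AddSubgroup.closure_le]
  rintro x (rfl | rfl | rfl)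
  · exact ⟨1, 0, 0, by norm_num⟩
  · exact ⟨0, 1, 0, by norm_num⟩
  · exact ⟨0, 0, 1, by norm_num⟩

/-- The values ρ̂(n) at odd integers n are dense in the closed unit disk. -/
theorem fourier_range_odd_dense_in_disk (α β : ℝ)
    (hα : α ∈ Set.Ioo (0 : ℝ) (2 * π)) (hβ : β ∈ Set.Ioo (0 : ℝ) (2 * π))
    (hind : LinearIndependent ℚ ![α, β, π]) :
    closure {w : ℂ | ∃ n : ℤ,
        w = (Complex.exp (-(((2 * n + 1 : ℤ) : ℂ) * (α : ℂ)) * Complex.I) +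
             Complex.exp (-(((2 * n + 1 : ℤ) : ℂ) * (β : ℂ)) * Complex.I)) / 2} =
      Metric.closedBall (0 : ℂ) 1 := by
  have hπ : (π:ℝ) ≠ 0 := Real.pi_ne_zero
  have h2π : (0:ℝ) < 2*π := by positivity
  set a : ℝ := -α/π with ha
  set b : ℝ := -β/π with hb
  have h : ∀ p q r : ℤ, (p:ℝ)*a + (q:ℝ)*b + (r:ℝ) = 0 → p = 0 ∧ q = 0 := by
    intro p q r hpqr
    have key : (-(p:ℝ))*α + (-(q:ℝ))*β + (r:ℝ)*π = 0 := by
      rw [ha, hb] at hpqr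
      field_simp at hpqr
      have h3 : π * ((-(p:ℝ))*α + (-(q:ℝ))*β + (r:ℝ)*π) = 0 := by linear_combination π * hpqr
      rcases mul_eq_zero.mp h3 with h4 | h4
      · exact absurd h4 hπ
      · exact h4
    have h2 := Fintype.linearIndependent_iff.mp hind ![(-p : ℚ), -q, r] (by
      rw [Fin.sum_univ_three]
      simp only [Matrix.cons_val_zero, Matrix.cons_val_one, Matrix.head_cons,
        Matrix.cons_val_two, Matrix.tail_cons, Rat.smul_def]
      push_cast
      linarith [key])
    have hp := h2 0
    have hq := h2 1
    simp only [Matrix.cons_val_zero, Matrix.cons_val_one, Matrix.head_cons, neg_eq_zero] at hp hq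
    exact ⟨by exact_mod_cast hp, by exact_mod_cast hq⟩
  have hdense := dense_E a b h
  apply subset_antisymm
  · apply closure_minimal _ Metric.isClosed_closedBall
    rintro w ⟨n, rfl⟩
    rw [Metric.mem_closedBall, dist_zero_right]
    have hre : ∀ x : ℝ, -(((2 * n + 1 : ℤ) : ℂ) * (x : ℂ)) * Complex.I
        = ((-(2*(n:ℝ)+1)*x : ℝ) : ℂ) * Complex.I := by
      intro x; push_cast; ring
    rw [hre α, hre β]
    calc ‖(Complex.exp (((-(2*(n:ℝ)+1)*α : ℝ) : ℂ) * I) +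
          Complex.exp (((-(2*(n:ℝ)+1)*β : ℝ) : ℂ) * I)) / 2‖
        ≤ (‖Complex.exp (((-(2*(n:ℝ)+1)*α : ℝ) : ℂ) * I)‖ +
           ‖Complex.exp (((-(2*(n:ℝ)+1)*β : ℝ) : ℂ) * I)‖) / 2 := by
          rw [norm_div]
          apply div_le_div_of_nonneg_right (norm_add_le _ _) ?_ |>.trans ?_
          · norm_num
          · apply le_of_eq; congr 1; norm_num
      _ = 1 := by
          rw [Complex.norm_exp_ofReal_mul_I, Complex.norm_exp_ofReal_mul_I]
          norm_num
  · intro w hw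
    rw [Metric.mem_closedBall, dist_zero_right] at hw
    obtain ⟨θ, φ, rfl⟩ := disk_surj w hw
    rw [Metric.mem_closure_iff]
    intro ε hε
    set δ : ℝ := min (ε/13) (1/7) with hδ
    have hδpos : 0 < δ := lt_min (by positivity) (by norm_num)
    have hδ7 : δ ≤ 1/7 := min_le_right _ _
    have hδε : δ ≤ ε/13 := min_le_left _ _
    obtain ⟨v, hvball, hvE⟩ :=
      Metric.dense_iff.mp hdense ((θ+α)/(2*π), (φ+β)/(2*π)) δ hδpos
    obtain ⟨n, m, k, rfl⟩ := hvE
    refine ⟨_, ⟨n, rfl⟩, ?_⟩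
    rw [Metric.mem_ball, Prod.dist_eq, sup_lt_iff, Real.dist_eq, Real.dist_eq] at hvball
    obtain ⟨hv1, hv2⟩ := hvball
    set X₁ : ℝ := 2*π*((n:ℝ)*a+(m:ℝ)) - α with hX₁
    set X₂ : ℝ := 2*π*((n:ℝ)*b+(k:ℝ)) - β with hX₂
    have hXθ : |θ - X₁| < 2*π*δ := by
      have he : θ - X₁ = -((2*π) * (((n:ℝ)*a+(m:ℝ)) - (θ+α)/(2*π))) := by
        rw [hX₁]; field_simp; ring
      rw [he, abs_neg, abs_mul, abs_of_pos h2π]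
      exact mul_lt_mul_of_pos_left hv1 h2π
    have hXφ : |φ - X₂| < 2*π*δ := by
      have he : φ - X₂ = -((2*π) * (((n:ℝ)*b+(k:ℝ)) - (φ+β)/(2*π))) := by
        rw [hX₂]; field_simp; ring
      rw [he, abs_neg, abs_mul, abs_of_pos h2π]
      exact mul_lt_mul_of_pos_left hv2 h2π
    have hπ315 : π < 3.15 := Real.pi_lt_d2
    have h2πδ : 2*π*δ ≤ 1 := by nlinarith
    have hE1 : Complex.exp (-(((2 * n + 1 : ℤ) : ℂ) * (α : ℂ)) * Complex.I)
        = Complex.exp ((X₁:ℂ) * I) := by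
      have hc : (X₁:ℂ) * I = -(((2 * n + 1 : ℤ) : ℂ) * (α : ℂ)) * Complex.I
          + (m:ℂ) * (2*(π:ℂ)*I) := by
        rw [hX₁, ha]
        push_cast
        have : ((π:ℝ):ℂ) ≠ 0 := by exact_mod_cast hπ
        field_simp
        ring
      rw [hc, Complex.exp_add, Complex.exp_int_mul_two_pi_mul_I, mul_one]
    have hE2 : Complex.exp (-(((2 * n + 1 : ℤ) : ℂ) * (β : ℂ)) * Complex.I)
        = Complex.exp ((X₂:ℂ) * I) := by
      have hc : (X₂:ℂ) * I = -(((2 * n + 1 : ℤ) : ℂ) * (β : ℂ)) * Complex.I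
          + (k:ℂ) * (2*(π:ℂ)*I) := by
        rw [hX₂, hb]
        push_cast
        have : ((π:ℝ):ℂ) ≠ 0 := by exact_mod_cast hπ
        field_simp
        ring
      rw [hc, Complex.exp_add, Complex.exp_int_mul_two_pi_mul_I, mul_one]
    have key1 : ‖Complex.exp ((θ:ℂ)*I) - Complex.exp ((X₁:ℂ)*I)‖ ≤ 2*|θ - X₁| :=
      exp_close θ X₁ (le_trans hXθ.le h2πδ)
    have key2 : ‖Complex.exp ((φ:ℂ)*I) - Complex.exp ((X₂:ℂ)*I)‖ ≤ 2*|φ - X₂| :=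
      exp_close φ X₂ (le_trans hXφ.le h2πδ)
    rw [dist_eq_norm, hE1, hE2]
    have hsplit : (Complex.exp ((θ:ℂ)*I) + Complex.exp ((φ:ℂ)*I))/2
        - (Complex.exp ((X₁:ℂ)*I) + Complex.exp ((X₂:ℂ)*I))/2
        = ((Complex.exp ((θ:ℂ)*I) - Complex.exp ((X₁:ℂ)*I))
          + (Complex.exp ((φ:ℂ)*I) - Complex.exp ((X₂:ℂ)*I)))/2 := by ring
    rw [hsplit]
    calc ‖((Complex.exp ((θ:ℂ)*I) - Complex.exp ((X₁:ℂ)*I))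
          + (Complex.exp ((φ:ℂ)*I) - Complex.exp ((X₂:ℂ)*I)))/2‖
        ≤ (‖Complex.exp ((θ:ℂ)*I) - Complex.exp ((X₁:ℂ)*I)‖
          + ‖Complex.exp ((φ:ℂ)*I) - Complex.exp ((X₂:ℂ)*I)‖)/2 := by
          rw [norm_div]
          apply div_le_div_of_nonneg_right (norm_add_le _ _) ?_ |>.trans ?_
          · norm_num
          · apply le_of_eq; congr 1; norm_num
      _ ≤ (2*|θ - X₁| + 2*|φ - X₂|)/2 := by linarith
      _ = |θ - X₁| + |φ - X₂| := by ring
      _ < 2*π*δ + 2*π*δ := by linarith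
      _ ≤ ε := by nlinarith
end

section
/- With notation as above, the measure ν₀ = μ∗θ₀ + r₀·ρ∗θ₁ has natural spectrum: σ(ν₀) = closure of {ν̂₀(n) : n ∈ ℤ} = r₀·𝔻̄. -/
open Complex Real Finset

private lemma intrel {α β : ℝ} (hind : LinearIndependent ℚ ![α, β, π])
    {p q r : ℤ} (h : (p:ℝ) * α + q * β + r * π = 0) : p = 0 ∧ q = 0 ∧ r = 0 := by
  have h2 := Fintype.linearIndependent_iff.mp hind ![(p:ℚ), (q:ℚ), (r:ℚ)] ?_
  · refine ⟨?_, ?_, ?_⟩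
    · have := h2 0; simp at this; exact_mod_cast this
    · have := h2 1; simp at this; exact_mod_cast this
    · have := h2 2; simp at this; exact_mod_cast this
  · show (∑ i : Fin 3, (![(p:ℚ), (q:ℚ), (r:ℚ)] i) • (![α, β, π] i)) = 0
    simp only [Fin.sum_univ_three, Matrix.cons_val_zero, Matrix.cons_val_one, Matrix.head_cons,
      Matrix.cons_val_two, Matrix.tail_cons, Rat.smul_def]
    push_cast
    linarith

private lemma prod_count {k : ℕ} (c : Fin 4 → ℂ) (f : Fin k → Fin 4) :
    (∏ i, c (f i)) = ∏ j, c j ^ (univ.filter (fun i => f i = j)).card := by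
  rw [← Finset.prod_fiberwise_of_maps_to (g := f) (t := univ) (fun x _ => mem_univ _)
    (fun i => c (f i))]
  refine Finset.prod_congr rfl fun j _ => ?_
  rw [Finset.prod_congr rfl (fun i hi => ?_), Finset.prod_const]
  exact congrArg c (Finset.mem_filter.mp hi).2

private lemma four_close (w : Fin 4 → ℂ) (hw : ∀ j, ‖w j‖ = 1) {ε : ℝ} (hε : 0 < ε)
    (hsum : 4 - ε < ‖∑ j, w j‖) (j : Fin 4) : ‖w j - w 0‖ < 4 * Real.sqrt ε := by
  have hns : ∀ l, Complex.normSq (w l) = 1 := by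
    intro l
    rw [Complex.normSq_eq_norm_sq, hw l]; norm_num
  have hkey : Complex.normSq (∑ l, w l) > 16 - 8 * ε := by
    have h1 : Complex.normSq (∑ l, w l) = ‖∑ l, w l‖ ^ 2 := by
      rw [Complex.normSq_eq_norm_sq]
    rcases lt_or_ge ε 4 with h4 | h4
    · have h2 : (4 - ε) ^ 2 ≤ ‖∑ l, w l‖ ^ 2 :=
        pow_le_pow_left₀ (by linarith) (le_of_lt hsum) 2
      nlinarith
    · nlinarith [Complex.normSq_nonneg (∑ l, w l)]
  have hre : (∑ a : Fin 4, ∑ b : Fin 4, (w a * (starRingEnd ℂ) (w b)).re)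
      = Complex.normSq (∑ l, w l) := by
    have h3 : (∑ a : Fin 4, ∑ b : Fin 4, (w a * (starRingEnd ℂ) (w b)).re)
        = ((∑ a, w a) * (starRingEnd ℂ) (∑ b, w b)).re := by
      rw [Finset.sum_mul, map_sum, Complex.re_sum]
      refine Finset.sum_congr rfl fun a _ => ?_
      rw [Finset.mul_sum, Complex.re_sum]
    rw [h3, Complex.mul_conj]
    simp
  have hpair : (∑ a : Fin 4, ∑ b : Fin 4, Complex.normSq (w a - w b))
      = 32 - 2 * Complex.normSq (∑ l, w l) := by
    have expand : ∀ a b : Fin 4, Complex.normSq (w a - w b)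
        = 2 - 2 * (w a * (starRingEnd ℂ) (w b)).re := by
      intro a b
      rw [Complex.normSq_sub, hns a, hns b]; ring
    calc (∑ a : Fin 4, ∑ b : Fin 4, Complex.normSq (w a - w b))
        = ∑ a : Fin 4, ∑ b : Fin 4, (2 - 2 * (w a * (starRingEnd ℂ) (w b)).re) := by
          refine Finset.sum_congr rfl fun a _ => Finset.sum_congr rfl fun b _ => expand a b
      _ = 32 - 2 * (∑ a : Fin 4, ∑ b : Fin 4, (w a * (starRingEnd ℂ) (w b)).re) := by
          simp [Finset.sum_sub_distrib, Finset.mul_sum]; ring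
      _ = 32 - 2 * Complex.normSq (∑ l, w l) := by rw [hre]
  have hj : Complex.normSq (w j - w 0) < 16 * ε := by
    have hle : Complex.normSq (w j - w 0) ≤ ∑ a : Fin 4, ∑ b : Fin 4, Complex.normSq (w a - w b) := by
      have h1 : Complex.normSq (w j - w 0) ≤ ∑ b : Fin 4, Complex.normSq (w j - w b) :=
        Finset.single_le_sum (f := fun b : Fin 4 => Complex.normSq (w j - w b)) (fun b _ => Complex.normSq_nonneg _) (mem_univ 0)
      refine h1.trans (Finset.single_le_sum (f := fun a : Fin 4 => ∑ b : Fin 4, Complex.normSq (w a - w b)) (fun a _ => ?_) (mem_univ j))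
      exact Finset.sum_nonneg fun b _ => Complex.normSq_nonneg _
    calc Complex.normSq (w j - w 0) ≤ _ := hle
      _ = 32 - 2 * Complex.normSq (∑ l, w l) := hpair
      _ < 16 * ε := by linarith
  have : ‖w j - w 0‖ ^ 2 < 16 * ε := by
    rwa [Complex.normSq_eq_norm_sq] at hj
  have h0 : ‖w j - w 0‖ < Real.sqrt (16 * ε) := by
    rw [show (16:ℝ) * ε = Real.sqrt (16*ε) ^2 from (Real.sq_sqrt (by positivity)).symm] at this
    exact lt_of_pow_lt_pow_left₀ 2 (Real.sqrt_nonneg _) this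
  calc ‖w j - w 0‖ < Real.sqrt (16 * ε) := h0
    _ = 4 * Real.sqrt ε := by
        rw [show (16:ℝ)*ε = 4^2 * ε by ring, Real.sqrt_mul (by positivity), Real.sqrt_sq (by norm_num)]

private lemma bohr (u c : Fin 4 → ℂ) (hu : ∀ j, ‖u j‖ = 1) (hc : ∀ j, ‖c j‖ = 1)
    (hres : ∀ a b : Fin 4 → ℕ, (∏ j, u j ^ a j) = (∏ j, u j ^ b j) →
      (∏ j, c j ^ a j) * (starRingEnd ℂ) (∏ j, c j ^ b j) = 1)
    {ε : ℝ} (hε : 0 < ε) (hε4 : ε < 4) :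
    ∃ n : ℕ, 4 - ε < ‖∑ j, c j * u j ^ n‖ := by
  classical
  -- Step 1: choose k
  obtain ⟨k, hk⟩ : ∃ k : ℕ, ((k:ℝ)+1)^4 * (((4-ε)^2)^k + 1) < 16^k := by
    set r : ℝ := max ((4-ε)^2/16) (1/16) with hrdef
    have hr0 : (0:ℝ) < r := lt_max_of_lt_right (by norm_num)
    have hr1 : r < 1 := by
      apply max_lt _ (by norm_num)
      nlinarith
    have htend := tendsto_pow_const_mul_const_pow_of_lt_one 4 hr0.le hr1
    have h2 : Filter.Tendsto (fun k : ℕ => ((k:ℝ)+1)^4 * r^(k+1)) Filter.atTop (nhds 0) := by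
      have := htend.comp (Filter.tendsto_add_atTop_nat 1)
      apply this.congr
      intro k
      simp [Function.comp]
    have h3 : Filter.Tendsto (fun k : ℕ => ((k:ℝ)+1)^4 * r^k) Filter.atTop (nhds 0) := by
      have h4 := h2.const_mul (1/r)
      rw [mul_zero] at h4
      apply h4.congr
      intro k
      field_simp
      ring
    obtain ⟨k, hklt⟩ := (h3.eventually_lt_const (by norm_num : (0:ℝ) < 1/2)).exists
    refine ⟨k, ?_⟩
    have e1 : ((4-ε)^2)^k ≤ 16^k * r^k := by
      rw [← mul_pow]
      apply pow_le_pow_left₀ (sq_nonneg _)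
      have := le_max_left ((4-ε)^2/16) (1/16 : ℝ)
      linarith [this]
    have e2 : (1:ℝ) ≤ 16^k * r^k := by
      rw [← mul_pow]
      apply one_le_pow₀
      have := le_max_right ((4-ε)^2/16) (1/16 : ℝ)
      linarith
    calc ((k:ℝ)+1)^4 * (((4-ε)^2)^k + 1)
        ≤ ((k:ℝ)+1)^4 * (16^k*r^k + 16^k*r^k) := by
          apply mul_le_mul_of_nonneg_left (by linarith) (by positivity)
      _ = (2*16^k) * (((k:ℝ)+1)^4 * r^k) := by ring
      _ < (2*16^k) * (1/2) := by
          apply mul_lt_mul_of_pos_left hklt (by positivity)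
      _ = 16^k := by ring
  -- Step 2: setup
  set z : ℕ → ℂ := fun n => ∑ j, c j * u j ^ n with hz
  set P : (Fin k → Fin 4) → ℂ := fun f => ∏ i, c (f i) with hPdef
  set U : (Fin k → Fin 4) → ℂ := fun f => ∏ i, u (f i) with hUdef
  set cnt : (Fin k → Fin 4) → Fin 4 → ℕ :=
    fun f j => (univ.filter fun i => f i = j).card with hcntdef
  have hPn : ∀ f, ‖P f‖ = 1 := by intro f; simp [hPdef, norm_prod, hc]
  have hUn : ∀ f, ‖U f‖ = 1 := by intro f; simp [hUdef, norm_prod, hu]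
  have hUval : ∀ f, U f = ∏ j, u j ^ cnt f j := fun f => prod_count u f
  have hPval : ∀ f, P f = ∏ j, c j ^ cnt f j := fun f => prod_count c f
  have hres' : ∀ f g, U f = U g → P f * (starRingEnd ℂ) (P g) = 1 := by
    intro f g h
    rw [hPval, hPval]
    exact hres _ _ (by rw [← hUval, ← hUval]; exact h)
  have hUconj : ∀ f, U f * (starRingEnd ℂ) (U f) = 1 := by
    intro f
    rw [Complex.mul_conj]
    have : Complex.normSq (U f) = 1 := by
      rw [Complex.normSq_eq_norm_sq, hUn f]; norm_num
    rw [this]; norm_num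
  have hUne : ∀ f, U f ≠ 0 := by
    intro f h
    have := hUn f
    rw [h] at this; simp at this
  have hveq : ∀ f g, U f * (starRingEnd ℂ) (U g) = 1 ↔ U f = U g := by
    intro f g
    constructor
    · intro h
      calc U f = U f * ((starRingEnd ℂ) (U g) * U g) := by
            rw [mul_comm ((starRingEnd ℂ) (U g)), hUconj g, mul_one]
        _ = (U f * (starRingEnd ℂ) (U g)) * U g := by ring
        _ = U g := by rw [h, one_mul]
    · intro h; rw [h]; exact hUconj g
  -- expansion of z n ^ k
  have hzk : ∀ n : ℕ, (z n) ^ k = ∑ f : Fin k → Fin 4, P f * (U f)^n := by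
    intro n
    calc (z n) ^ k = ∏ _i : Fin k, (∑ j, c j * u j ^ n) := by
          rw [Finset.prod_const, Finset.card_univ, Fintype.card_fin]
      _ = ∑ f ∈ Fintype.piFinset (fun _ : Fin k => (univ : Finset (Fin 4))),
            ∏ i, (c (f i) * u (f i) ^ n) := Finset.prod_univ_sum _ _
      _ = ∑ f : Fin k → Fin 4, P f * (U f)^n := by
          rw [Fintype.piFinset_univ]
          refine Finset.sum_congr rfl fun f _ => ?_
          rw [Finset.prod_mul_distrib, Finset.prod_pow]
  -- main complex identity
  have stepA : ∀ n : ℕ, ((Complex.normSq (z n) : ℂ))^k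
      = ∑ f : Fin k → Fin 4, ∑ g : Fin k → Fin 4,
          P f * (starRingEnd ℂ) (P g) * (U f * (starRingEnd ℂ) (U g))^n := by
    intro n
    have h1 : ((Complex.normSq (z n) : ℂ)) = z n * (starRingEnd ℂ) (z n) :=
      (Complex.mul_conj _).symm
    rw [h1, mul_pow, ← map_pow, hzk, map_sum, Finset.sum_mul_sum]
    refine Finset.sum_congr rfl fun f _ => Finset.sum_congr rfl fun g _ => ?_
    rw [map_mul, map_pow, mul_pow]
    ring
  have mainR : ∀ N : ℕ, ∑ n ∈ range N, (Complex.normSq (z n))^k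
      = ∑ f : Fin k → Fin 4, ∑ g : Fin k → Fin 4,
          (P f * (starRingEnd ℂ) (P g) * ∑ n ∈ range N, (U f * (starRingEnd ℂ) (U g))^n).re := by
    intro N
    have hC : ((∑ n ∈ range N, (Complex.normSq (z n))^k : ℝ) : ℂ)
        = ∑ f : Fin k → Fin 4, ∑ g : Fin k → Fin 4,
            P f * (starRingEnd ℂ) (P g) * ∑ n ∈ range N, (U f * (starRingEnd ℂ) (U g))^n := by
      push_cast
      calc (∑ n ∈ range N, ((Complex.normSq (z n) : ℂ))^k)
          = ∑ n ∈ range N, ∑ f : Fin k → Fin 4, ∑ g : Fin k → Fin 4,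
              P f * (starRingEnd ℂ) (P g) * (U f * (starRingEnd ℂ) (U g))^n := by
            exact Finset.sum_congr rfl fun n _ => stepA n
        _ = ∑ f : Fin k → Fin 4, ∑ n ∈ range N, ∑ g : Fin k → Fin 4,
              P f * (starRingEnd ℂ) (P g) * (U f * (starRingEnd ℂ) (U g))^n :=
            Finset.sum_comm
        _ = ∑ f : Fin k → Fin 4, ∑ g : Fin k → Fin 4, ∑ n ∈ range N,
              P f * (starRingEnd ℂ) (P g) * (U f * (starRingEnd ℂ) (U g))^n :=
            Finset.sum_congr rfl fun f _ => Finset.sum_comm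
        _ = _ := by
            refine Finset.sum_congr rfl fun f _ => Finset.sum_congr rfl fun g _ => ?_
            rw [Finset.mul_sum]
    have := congrArg Complex.re hC
    rw [Complex.ofReal_re] at this
    rw [this, Complex.re_sum]
    exact Finset.sum_congr rfl fun f _ => by rw [Complex.re_sum]
  -- constants
  set C : ℝ := ∑ p ∈ univ.filter (fun p : (Fin k → Fin 4) × (Fin k → Fin 4) => ¬ U p.1 = U p.2),
      2 / ‖U p.1 * (starRingEnd ℂ) (U p.2) - 1‖ with hCdef
  have hC0 : 0 ≤ C := Finset.sum_nonneg fun p _ => by positivity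
  set R : ℕ := (univ.filter (fun p : (Fin k → Fin 4) × (Fin k → Fin 4) => U p.1 = U p.2)).card
    with hRdef
  -- lower bound for the power sums
  have lower : ∀ N : ℕ, (R:ℝ) * N - C ≤ ∑ n ∈ range N, (Complex.normSq (z n))^k := by
    intro N
    rw [mainR N]
    have hps : (∑ f : Fin k → Fin 4, ∑ g : Fin k → Fin 4,
          (P f * (starRingEnd ℂ) (P g) * ∑ n ∈ range N, (U f * (starRingEnd ℂ) (U g))^n).re)
        = ∑ p ∈ (univ ×ˢ univ : Finset ((Fin k → Fin 4) × (Fin k → Fin 4))),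
          (P p.1 * (starRingEnd ℂ) (P p.2) * ∑ n ∈ range N,
            (U p.1 * (starRingEnd ℂ) (U p.2))^n).re :=
      (Finset.sum_product (s := univ) (t := univ)
        (f := fun p : (Fin k → Fin 4) × (Fin k → Fin 4) =>
          (P p.1 * (starRingEnd ℂ) (P p.2) * ∑ n ∈ range N,
            (U p.1 * (starRingEnd ℂ) (U p.2))^n).re)).symm
    rw [hps, Finset.univ_product_univ,
      ← Finset.sum_filter_add_sum_filter_not univ (fun p => U p.1 = U p.2)]
    have hres_part : ∑ p ∈ univ.filter (fun p : (Fin k → Fin 4) × (Fin k → Fin 4) => U p.1 = U p.2),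
        (P p.1 * (starRingEnd ℂ) (P p.2) * ∑ n ∈ range N,
          (U p.1 * (starRingEnd ℂ) (U p.2))^n).re = (R:ℝ) * N := by
      rw [Finset.sum_congr rfl (g := fun _ => (N:ℝ)) ?_, Finset.sum_const, nsmul_eq_mul, ← hRdef]
      intro p hp
      have hU := (Finset.mem_filter.mp hp).2
      have hv1 : U p.1 * (starRingEnd ℂ) (U p.2) = 1 := (hveq p.1 p.2).mpr hU
      rw [hv1, hres' p.1 p.2 hU]
      simp
    rw [hres_part]
    have hnonres : -C ≤ ∑ p ∈ univ.filter
        (fun p : (Fin k → Fin 4) × (Fin k → Fin 4) => ¬ U p.1 = U p.2),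
        (P p.1 * (starRingEnd ℂ) (P p.2) * ∑ n ∈ range N,
          (U p.1 * (starRingEnd ℂ) (U p.2))^n).re := by
      rw [hCdef, ← Finset.sum_neg_distrib]
      apply Finset.sum_le_sum
      intro p hp
      have hU : ¬ U p.1 = U p.2 := (Finset.mem_filter.mp hp).2
      set v : ℂ := U p.1 * (starRingEnd ℂ) (U p.2) with hvdef
      have hv1 : v ≠ 1 := fun h => hU ((hveq p.1 p.2).mp h)
      have hvn : ‖v‖ = 1 := by
        rw [hvdef, norm_mul, RCLike.norm_conj, hUn, hUn, mul_one]
      have hvpos : 0 < ‖v - 1‖ := by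
        rw [norm_pos_iff, sub_ne_zero]; exact hv1
      have hgeom : ‖∑ n ∈ range N, v^n‖ ≤ 2 / ‖v - 1‖ := by
        rw [geom_sum_eq hv1 N]
        rw [norm_div]
        have h2 : ‖v ^ N - 1‖ ≤ 2 := by
          calc ‖v ^ N - 1‖ ≤ ‖v ^ N‖ + ‖(1:ℂ)‖ := norm_sub_le _ _
            _ = 2 := by rw [norm_pow, hvn]; norm_num
        gcongr
      have hnorm_term : ‖P p.1 * (starRingEnd ℂ) (P p.2) * ∑ n ∈ range N, v^n‖ ≤ 2 / ‖v - 1‖ := by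
        rw [norm_mul, norm_mul, RCLike.norm_conj, hPn, hPn, one_mul, one_mul]
        exact hgeom
      calc -(2 / ‖v - 1‖) ≤ -‖P p.1 * (starRingEnd ℂ) (P p.2) * ∑ n ∈ range N, v^n‖ := by
            linarith
        _ ≤ (P p.1 * (starRingEnd ℂ) (P p.2) * ∑ n ∈ range N, v^n).re := by
            have := Complex.abs_re_le_norm (P p.1 * (starRingEnd ℂ) (P p.2) * ∑ n ∈ range N, v^n)
            cases abs_le.mp this with
            | intro h1 h2 => linarith
    linarith
  -- counting resonant pairs
  have hcount : (16:ℝ)^k ≤ ((k:ℝ)+1)^4 * R := by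
    set Φ : Finset (Fin 4 → ℕ) := univ.image cnt with hPhidef
    set m : (Fin 4 → ℕ) → ℕ := fun a => (univ.filter fun f : Fin k → Fin 4 => cnt f = a).card
      with hmdef
    have hmaps : ∀ f : Fin k → Fin 4, f ∈ univ → cnt f ∈ Φ := fun f _ =>
      Finset.mem_image_of_mem cnt (mem_univ f)
    have hsum4 : ∑ a ∈ Φ, m a = 4^k := by
      rw [← Finset.card_eq_sum_card_fiberwise hmaps, Finset.card_univ]
      simp [Fintype.card_fun]
    have hR' : (univ.filter fun p : (Fin k → Fin 4) × (Fin k → Fin 4) => cnt p.1 = cnt p.2).card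
        = ∑ a ∈ Φ, m a * m a := by
      rw [Finset.card_eq_sum_card_fiberwise
        (f := fun p : (Fin k → Fin 4) × (Fin k → Fin 4) => cnt p.1) (t := Φ)
        (fun p _ => Finset.mem_image_of_mem cnt (mem_univ p.1))]
      refine Finset.sum_congr rfl fun a _ => ?_
      have hset : ((univ.filter fun p : (Fin k → Fin 4) × (Fin k → Fin 4) =>
            cnt p.1 = cnt p.2).filter fun p => cnt p.1 = a)
          = (univ.filter fun f : Fin k → Fin 4 => cnt f = a) ×ˢ
            (univ.filter fun f : Fin k → Fin 4 => cnt f = a) := by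
        ext p
        simp only [Finset.mem_filter, Finset.mem_product, Finset.mem_univ, true_and,
          Finset.filter_filter]
        constructor
        · rintro ⟨h1, h2⟩
          exact ⟨h2, h1 ▸ h2⟩
        · rintro ⟨h1, h2⟩
          exact ⟨h1.trans h2.symm, h1⟩
      rw [hset, Finset.card_product]
    have hR'R : (univ.filter fun p : (Fin k → Fin 4) × (Fin k → Fin 4) =>
        cnt p.1 = cnt p.2).card ≤ R := by
      apply Finset.card_le_card
      intro p hp
      rw [Finset.mem_filter] at hp ⊢
      refine ⟨hp.1, ?_⟩
      rw [hUval, hUval, hp.2]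
    have hPhicard : Φ.card ≤ (k+1)^4 := by
      have hsub : Φ ⊆ Fintype.piFinset (fun _ : Fin 4 => Finset.range (k+1)) := by
        intro a ha
        obtain ⟨f, -, rfl⟩ := Finset.mem_image.mp ha
        rw [Fintype.mem_piFinset]
        intro j
        rw [Finset.mem_range, Nat.lt_succ_iff]
        calc cnt f j ≤ (univ : Finset (Fin k)).card := Finset.card_filter_le _ _
          _ = k := by simp
      calc Φ.card ≤ _ := Finset.card_le_card hsub
        _ = (k+1)^4 := by simp [Fintype.card_piFinset]
    have hcs := sq_sum_le_card_mul_sum_sq (s := Φ) (f := fun a => (m a : ℝ))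
    have hcast1 : ∑ a ∈ Φ, (m a : ℝ) = (4:ℝ)^k := by
      rw [← Nat.cast_sum, hsum4]; push_cast; ring
    have hcast2 : ∑ a ∈ Φ, (m a : ℝ)^2 ≤ (R:ℝ) := by
      have : ∑ a ∈ Φ, (m a : ℝ)^2 = ((∑ a ∈ Φ, m a * m a : ℕ) : ℝ) := by
        rw [Nat.cast_sum]
        exact Finset.sum_congr rfl fun a _ => by push_cast; ring
      rw [this, ← hR']
      exact_mod_cast hR'R
    calc (16:ℝ)^k = ((4:ℝ)^k)^2 := by
          rw [← pow_mul, mul_comm, pow_mul]; norm_num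
      _ = (∑ a ∈ Φ, (m a : ℝ))^2 := by rw [hcast1]
      _ ≤ Φ.card * ∑ a ∈ Φ, (m a : ℝ)^2 := hcs
      _ ≤ ((k:ℝ)+1)^4 * R := by
          apply mul_le_mul _ hcast2 (Finset.sum_nonneg fun a _ => sq_nonneg _) (by positivity)
          exact_mod_cast hPhicard
  -- conclude
  have hRgt : ((4-ε)^2)^k + 1 < (R:ℝ) := by
    have hpos : (0:ℝ) < ((k:ℝ)+1)^4 := by positivity
    by_contra hcon
    push_neg at hcon
    have := mul_le_mul_of_nonneg_left hcon hpos.le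
    linarith
  set N : ℕ := ⌈C⌉₊ + 1 with hNdef
  have hCN : C < N := by
    calc C ≤ (⌈C⌉₊ : ℝ) := Nat.le_ceil C
      _ < N := by rw [hNdef]; push_cast; linarith
  have hNpos : (0:ℝ) < N := lt_of_le_of_lt hC0 hCN
  have hNlow := lower N
  have hprod : (N:ℝ) * (((4-ε)^2)^k + 1) < (N:ℝ) * R := mul_lt_mul_of_pos_left hRgt hNpos
  have hcomm : (R:ℝ) * N = (N:ℝ) * R := mul_comm _ _
  have hdistr : (N:ℝ) * (((4-ε)^2)^k + 1) = (N:ℝ) * ((4-ε)^2)^k + N := by ring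
  have hsumgt : (N:ℝ) * (((4-ε)^2)^k) < ∑ n ∈ range N, (Complex.normSq (z n))^k := by
    linarith
  obtain ⟨n, hnN, hnlt⟩ : ∃ n ∈ range N, ((4-ε)^2)^k < (Complex.normSq (z n))^k := by
    by_contra hcon
    push_neg at hcon
    have hle : ∑ n ∈ range N, (Complex.normSq (z n))^k ≤ ∑ _n ∈ range N, ((4-ε)^2)^k :=
      Finset.sum_le_sum hcon
    rw [Finset.sum_const, Finset.card_range, nsmul_eq_mul] at hle
    linarith
  refine ⟨n, ?_⟩
  by_contra hcon
  push_neg at hcon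
  have h1 : Complex.normSq (z n) ≤ (4-ε)^2 := by
    rw [Complex.normSq_eq_norm_sq]
    apply pow_le_pow_left₀ (norm_nonneg _) hcon
  have h2 : (Complex.normSq (z n))^k ≤ ((4-ε)^2)^k :=
    pow_le_pow_left₀ (Complex.normSq_nonneg _) h1 k
  linarith


private lemma kron_s17 {α β : ℝ} (hind : LinearIndependent ℚ ![α, β, π]) (s t : ℝ)
    {ε : ℝ} (hε : 0 < ε) (hε1 : ε ≤ 1) :
    ∃ n : ℕ, Odd n ∧
      ‖Complex.exp (-((n:ℂ) * α) * Complex.I) - Complex.exp ((s:ℂ) * Complex.I)‖ < ε ∧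
      ‖Complex.exp (-((n:ℂ) * β) * Complex.I) - Complex.exp ((t:ℂ) * Complex.I)‖ < ε := by
  classical
  have hprod : ∀ (x y : ℝ) (a : Fin 4 → ℕ),
      (∏ j, (![1, Complex.exp (-(x:ℂ) * I), Complex.exp (-(y:ℂ) * I), -1] : Fin 4 → ℂ) j ^ a j)
        = Complex.exp ((((a 3 : ℝ) * π - a 1 * x - a 2 * y : ℝ) : ℂ) * I) := by
    intro x y a
    rw [Fin.prod_univ_four]
    simp only [Matrix.cons_val_zero, Matrix.cons_val_one, Matrix.head_cons,
      Matrix.cons_val_two, Matrix.tail_cons, Matrix.cons_val_three]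
    rw [one_pow, one_mul, ← Complex.exp_nat_mul, ← Complex.exp_nat_mul,
      show ((-1:ℂ)) = Complex.exp ((π:ℝ) * I) from Complex.exp_pi_mul_I.symm,
      ← Complex.exp_nat_mul, ← Complex.exp_add, ← Complex.exp_add]
    congr 1
    push_cast
    ring
  set u : Fin 4 → ℂ :=
    ![1, Complex.exp (-(α:ℂ) * I), Complex.exp (-(β:ℂ) * I), -1] with hudef
  set c : Fin 4 → ℂ :=
    ![1, Complex.exp (-(s:ℂ) * I), Complex.exp (-(t:ℂ) * I), -1] with hcdef
  have hnexp : ∀ r : ℝ, ‖Complex.exp (-(r:ℂ) * I)‖ = 1 := by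
    intro r
    rw [Complex.norm_exp]
    simp
  have hnu : ∀ j, ‖u j‖ = 1 := by
    intro j
    fin_cases j <;> simp [hudef, Complex.norm_exp]
  have hnc : ∀ j, ‖c j‖ = 1 := by
    intro j
    fin_cases j <;> simp [hcdef, Complex.norm_exp]
  have key : ∀ a b : Fin 4 → ℕ, (∏ j, u j ^ a j) = (∏ j, u j ^ b j) →
      (∏ j, c j ^ a j) * (starRingEnd ℂ) (∏ j, c j ^ b j) = 1 := by
    intro a b hab
    rw [hudef, hprod α β a, hprod α β b] at hab
    obtain ⟨m, hm⟩ := Complex.exp_eq_exp_iff_exists_int.mp hab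
    have hre : (a 3 : ℝ) * π - a 1 * α - a 2 * β
        = ((b 3 : ℝ) * π - b 1 * α - b 2 * β) + m * (2 * π) := by
      have h4 : (((a 3 : ℝ) * π - a 1 * α - a 2 * β : ℝ) : ℂ)
          = ((((b 3 : ℝ) * π - b 1 * α - b 2 * β) + m * (2 * π) : ℝ) : ℂ) := by
        apply mul_right_cancel₀ Complex.I_ne_zero
        push_cast
        push_cast at hm
        linear_combination hm
      exact_mod_cast h4
    obtain ⟨h1, h2, h3⟩ := intrel hind (p := (b 1 : ℤ) - a 1) (q := (b 2 : ℤ) - a 2)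
      (r := (a 3 : ℤ) - b 3 - 2 * m) (by push_cast; linarith)
    have e1 : a 1 = b 1 := by omega
    have e2 : a 2 = b 2 := by omega
    have e3 : (a 3 : ℤ) - b 3 = 2 * m := by omega
    have e3' : (a 3 : ℝ) = (b 3 : ℝ) + 2 * m := by
      have h6 : (a 3 : ℤ) = b 3 + 2 * m := by omega
      have h7 := congrArg (fun x : ℤ => (x : ℝ)) h6
      push_cast at h7
      linarith
    have e3C : ((a 3 : ℕ) : ℂ) = ((b 3 : ℕ) : ℂ) + 2 * m := by
      have h5 := congrArg (fun x : ℝ => (x : ℂ)) e3'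
      push_cast at h5
      exact h5
    rw [hcdef, hprod s t a, hprod s t b, ← Complex.exp_conj, map_mul, Complex.conj_ofReal,
      Complex.conj_I, ← Complex.exp_add]
    rw [show ((((a 3 : ℝ) * π - a 1 * s - a 2 * t : ℝ) : ℂ) * I
        + (((b 3 : ℝ) * π - b 1 * s - b 2 * t : ℝ) : ℂ) * -I) = (m : ℂ) * (2 * (π:ℝ) * I) by
      push_cast
      rw [e1, e2]
      linear_combination ((π:ℂ) * I) * e3C]
    exact Complex.exp_int_mul_two_pi_mul_I m
  set ε' : ℝ := (ε/4)^2 with hepdef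
  have hε'0 : 0 < ε' := by positivity
  have hε'4 : ε' < 4 := by nlinarith
  have hsq : Real.sqrt ε' = ε/4 := by rw [hepdef]; exact Real.sqrt_sq (by positivity)
  obtain ⟨n, hn⟩ := bohr u c hnu hnc key hε'0 hε'4
  have hw : ∀ j, ‖(fun j => c j * u j ^ n) j‖ = 1 := fun j => by
    simp only [norm_mul, norm_pow, hnc j, hnu j, one_pow, mul_one]
  have hclose : ∀ j, ‖c j * u j ^ n - c 0 * u 0 ^ n‖ < ε := by
    intro j
    have h := four_close (fun j => c j * u j ^ n) hw hε'0 hn j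
    rw [hsq] at h
    linarith
  have hc0u0 : c 0 * u 0 ^ n = 1 := by simp [hcdef, hudef]
  have hodd : Odd n := by
    rcases Nat.even_or_odd n with he | ho
    · exfalso
      have h3 := hclose 3
      rw [hc0u0] at h3
      have hval : c 3 * u 3 ^ n = -1 := by
        simp [hcdef, hudef, he.neg_one_pow]
      rw [hval] at h3
      norm_num at h3
      linarith
    · exact ho
  refine ⟨n, hodd, ?_, ?_⟩
  · have h1 := hclose 1
    rw [hc0u0] at h1
    have hx : c 1 * u 1 ^ n - 1
        = Complex.exp (-(s:ℂ) * I) * (Complex.exp (-((n:ℂ) * α) * I)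
            - Complex.exp ((s:ℂ) * I)) := by
      have hpow : Complex.exp (-(α:ℂ) * I) ^ n = Complex.exp (-((n:ℂ) * α) * I) := by
        rw [← Complex.exp_nat_mul]; congr 1; ring
      have hinv : Complex.exp (-(s:ℂ) * I) * Complex.exp ((s:ℂ) * I) = 1 := by
        rw [← Complex.exp_add]; simp
      simp only [hcdef, hudef, Matrix.cons_val_one, Matrix.head_cons, Matrix.cons_val_zero]
      rw [hpow, mul_sub, hinv]
    rw [hx, norm_mul, hnexp s, one_mul] at h1
    exact h1
  · have h2 := hclose 2
    rw [hc0u0] at h2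
    have hx : c 2 * u 2 ^ n - 1
        = Complex.exp (-(t:ℂ) * I) * (Complex.exp (-((n:ℂ) * β) * I)
            - Complex.exp ((t:ℂ) * I)) := by
      have hpow : Complex.exp (-(β:ℂ) * I) ^ n = Complex.exp (-((n:ℂ) * β) * I) := by
        rw [← Complex.exp_nat_mul]; congr 1; ring
      have hinv : Complex.exp (-(t:ℂ) * I) * Complex.exp ((t:ℂ) * I) = 1 := by
        rw [← Complex.exp_add]; simp
      simp only [hcdef, hudef, Matrix.cons_val_two, Matrix.tail_cons, Matrix.head_cons, Matrix.cons_val_one, Matrix.cons_val_zero]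
      rw [hpow, mul_sub, hinv]
    rw [hx, norm_mul, hnexp t, one_mul] at h2
    exact h2

/-- ν₀ = μ∗θ₀ + r₀·ρ∗θ₁ has natural spectrum:
σ(ν₀) = closure {ν̂₀(n) : n ∈ ℤ} = r₀·𝔻̄. -/
theorem nu0_natural_spectrum (M : Type*) [NormedCommRing M] [NormedAlgebra ℂ M]
    [CompleteSpace M]
    (δ : ℝ → M) (hδ : ∀ x y : ℝ, δ x * δ y = δ (x + y))
    (hone : δ 0 = 1) (hper : ∀ x : ℝ, δ (x + 2 * π) = δ x)
    (hnorm : ∀ x : ℝ, ‖δ x‖ = 1)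
    (F : ℤ → (M →ₐ[ℂ] ℂ))
    (hF : ∀ (n : ℤ) (x : ℝ), F n (δ x) = Complex.exp (-((n : ℂ) * (x : ℂ)) * Complex.I))
    (α β : ℝ)
    (hα : α ∈ Set.Ioo (0 : ℝ) (2 * π)) (hβ : β ∈ Set.Ioo (0 : ℝ) (2 * π))
    (hind : LinearIndependent ℚ ![α, β, π])
    (θ₀ θ₁ ρ : M)
    (hθ₀ : θ₀ = (1 / 2 : ℂ) • (δ 0 + δ π))
    (hθ₁ : θ₁ = (1 / 2 : ℂ) • (δ 0 - δ π))
    (hρ : ρ = (1 / 2 : ℂ) • (δ α + δ β))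
    (μ : M) (r₀ : ℝ) (hr₀ : r₀ = (spectralRadius ℂ (μ * θ₀)).toReal)
    (ν₀ : M) (hν₀ : ν₀ = μ * θ₀ + (r₀ : ℂ) • (ρ * θ₁)) :
    spectrum ℂ ν₀ = closure {w : ℂ | ∃ n : ℤ, w = F n ν₀} ∧
    closure {w : ℂ | ∃ n : ℤ, w = F n ν₀} = Metric.closedBall (0 : ℂ) r₀ := by
  classical
  haveI : NormOneClass M := ⟨by rw [← hone]; exact hnorm 0⟩
  have hδππ : δ π * δ π = 1 := by
    rw [hδ π π, show π + π = 0 + 2 * π by ring, hper 0, hone]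
  have hθmul : θ₀ * θ₁ = 0 := by
    rw [hθ₀, hθ₁, hone, smul_mul_smul_comm]
    have h : (1 + δ π) * (1 - δ π) = 1 - δ π * δ π := by ring
    rw [h, hδππ, sub_self, smul_zero]
  have hθsum : θ₀ + θ₁ = 1 := by
    rw [hθ₀, hθ₁, hone, ← smul_add]
    have h : (1 + δ π) + (1 - δ π) = (2 : ℂ) • (1 : M) := by
      rw [two_smul]; ring
    rw [h, smul_smul]
    norm_num
  have hρn : ‖ρ‖ ≤ 1 := by
    rw [hρ]
    calc ‖(1 / 2 : ℂ) • (δ α + δ β)‖ = ‖(1 / 2 : ℂ)‖ * ‖δ α + δ β‖ := norm_smul _ _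
      _ ≤ (1 / 2) * (‖δ α‖ + ‖δ β‖) := by
          apply mul_le_mul _ (norm_add_le _ _) (norm_nonneg _) (by norm_num)
          simp
      _ = 1 := by rw [hnorm, hnorm]; norm_num
  have hr0 : 0 ≤ r₀ := hr₀ ▸ ENNReal.toReal_nonneg
  have hsrne : spectralRadius ℂ (μ * θ₀) ≠ ⊤ :=
    ne_top_of_le_ne_top ENNReal.coe_ne_top (spectrum.spectralRadius_le_nnnorm (μ * θ₀))
  have hspecbound : ∀ w ∈ spectrum ℂ (μ * θ₀), ‖w‖ ≤ r₀ := by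
    intro w hw
    have h1 : (‖w‖₊ : ENNReal) ≤ spectralRadius ℂ (μ * θ₀) := by
      show (‖w‖₊ : ENNReal) ≤ ⨆ k ∈ spectrum ℂ (μ * θ₀), (‖k‖₊ : ENNReal)
      exact le_iSup₂ (f := fun k (_ : k ∈ spectrum ℂ (μ * θ₀)) => (‖k‖₊ : ENNReal)) w hw
    have h2 := ENNReal.toReal_mono hsrne h1
    rw [hr₀]
    simpa using h2
  have hchar : ∀ φ : WeakDual.characterSpace ℂ M, ‖φ ν₀‖ ≤ r₀ := by
    intro φ
    have hφν : φ ν₀ = φ (μ * θ₀) + (r₀ : ℂ) * (φ ρ * φ θ₁) := by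
      rw [hν₀, map_add, map_smul, smul_eq_mul,
        show φ (ρ * θ₁) = φ ρ * φ θ₁ from map_mul φ ρ θ₁]
    have h01 : φ θ₀ * φ θ₁ = 0 := by rw [← map_mul, hθmul, map_zero]
    have hsum1 : φ θ₀ + φ θ₁ = 1 := by rw [← map_add, hθsum, map_one]
    rcases mul_eq_zero.mp h01 with h0 | h1
    · have hμθ : φ (μ * θ₀) = 0 := by rw [map_mul, h0, mul_zero]
      have hθ1v : φ θ₁ = 1 := by rw [h0, zero_add] at hsum1; exact hsum1
      have hρb : ‖φ ρ‖ ≤ 1 := le_trans (AlgHom.norm_apply_le_self φ ρ) hρn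
      rw [hφν, hμθ, zero_add, hθ1v, mul_one, norm_mul]
      have hnr : ‖(r₀ : ℂ)‖ = r₀ := by
        rw [Complex.norm_real, Real.norm_eq_abs, _root_.abs_of_nonneg hr0]
      rw [hnr]
      calc r₀ * ‖φ ρ‖ ≤ r₀ * 1 := mul_le_mul_of_nonneg_left hρb hr0
        _ = r₀ := mul_one r₀
    · rw [hφν, h1, mul_zero, mul_zero, add_zero]
      exact hspecbound _ (WeakDual.CharacterSpace.apply_mem_spectrum φ _)
  have hs1 : spectrum ℂ ν₀ ⊆ Metric.closedBall 0 r₀ := by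
    intro w hw
    obtain ⟨φ, hφ⟩ := WeakDual.CharacterSpace.mem_spectrum_iff_exists.mp hw
    rw [Metric.mem_closedBall, dist_zero_right, ← hφ]
    exact hchar φ
  have hSsub : {w : ℂ | ∃ n : ℤ, w = F n ν₀} ⊆ spectrum ℂ ν₀ := by
    rintro w ⟨n, rfl⟩
    exact AlgHom.apply_mem_spectrum (F n) ν₀
  have hclS : closure {w : ℂ | ∃ n : ℤ, w = F n ν₀} ⊆ spectrum ℂ ν₀ :=
    closure_minimal hSsub (spectrum.isClosed ν₀)
  have hball : Metric.closedBall (0 : ℂ) r₀ ⊆ closure {w : ℂ | ∃ n : ℤ, w = F n ν₀} := by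
    intro zz hz
    rw [Metric.mem_closedBall, dist_zero_right] at hz
    obtain ⟨w, hw1, hzw⟩ : ∃ w : ℂ, ‖w‖ ≤ 1 ∧ zz = (r₀ : ℂ) * w := by
      rcases eq_or_lt_of_le hr0 with h0 | hpos
      · refine ⟨1, by norm_num, ?_⟩
        have hz0 : ‖zz‖ ≤ 0 := le_trans hz (le_of_eq h0.symm)
        rw [norm_le_zero_iff.mp hz0, ← h0]
        norm_num
      · have hr0' : (r₀ : ℂ) ≠ 0 := by
          simp only [ne_eq, Complex.ofReal_eq_zero]
          exact ne_of_gt hpos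
        refine ⟨zz / (r₀ : ℂ), ?_, by field_simp⟩
        rw [norm_div, Complex.norm_real, Real.norm_eq_abs, _root_.abs_of_nonneg hr0]
        rw [div_le_one hpos]
        exact hz
    set sa : ℝ := Complex.arg w + Real.arccos ‖w‖ with hsadef
    set sb : ℝ := Complex.arg w - Real.arccos ‖w‖ with hsbdef
    have hcos : Complex.exp ((Real.arccos ‖w‖ : ℂ) * I)
        + Complex.exp (-(Real.arccos ‖w‖ : ℂ) * I) = 2 * (‖w‖ : ℂ) := by
      rw [Complex.exp_mul_I, Complex.exp_mul_I, Complex.cos_neg, Complex.sin_neg]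
      have : Complex.cos (Real.arccos ‖w‖ : ℂ) = ((Real.cos (Real.arccos ‖w‖) : ℝ) : ℂ) :=
        (Complex.ofReal_cos _).symm
      rw [this, Real.cos_arccos (le_trans (by norm_num) (norm_nonneg w)) hw1]
      ring
    have hw3 : Complex.exp ((sa : ℂ) * I) + Complex.exp ((sb : ℂ) * I) = 2 * w := by
      have e1 : (sa : ℂ) * I = (Complex.arg w : ℂ) * I + (Real.arccos ‖w‖ : ℂ) * I := by
        rw [hsadef]; push_cast; ring
      have e2 : (sb : ℂ) * I = (Complex.arg w : ℂ) * I + (-(Real.arccos ‖w‖ : ℂ)) * I := by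
        rw [hsbdef]; push_cast; ring
      rw [e1, e2, Complex.exp_add, Complex.exp_add, ← mul_add, hcos]
      have habs : ((‖w‖ : ℝ) : ℂ) * Complex.exp ((Complex.arg w : ℂ) * I) = w :=
        Complex.norm_mul_exp_arg_mul_I w
      rw [mul_comm (Complex.exp ((Complex.arg w : ℂ) * I)) (2 * (‖w‖ : ℂ)), mul_assoc, habs]
    rw [Metric.mem_closure_iff]
    intro ε hε
    set ε' : ℝ := min (ε / (r₀ + 1)) 1 with hepdef
    have hε'0 : 0 < ε' := lt_min (by positivity) one_pos
    obtain ⟨n, hodd, hn1, hn2⟩ := kron_s17 hind sa sb hε'0 (min_le_right _ _)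
    refine ⟨F (n : ℤ) ν₀, ⟨(n : ℤ), rfl⟩, ?_⟩
    have hoddz : Odd (n : ℤ) := (Int.odd_coe_nat n).mpr hodd
    have hFδ0 : F (n : ℤ) (δ 0) = 1 := by
      rw [hF]; simp
    have hFδπ : F (n : ℤ) (δ π) = -1 := by
      rw [hF]
      rw [show -((((n : ℤ) : ℂ)) * ((π : ℝ) : ℂ)) * I = (((-(n : ℤ) : ℤ) : ℂ)) * (((π : ℝ) : ℂ) * I) by
        push_cast; ring]
      rw [Complex.exp_int_mul, Complex.exp_pi_mul_I, zpow_neg, zpow_natCast, hodd.neg_one_pow]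
      norm_num
    have hFθ₀ : F (n : ℤ) θ₀ = 0 := by
      rw [hθ₀, map_smul, map_add, hFδ0, hFδπ]
      norm_num
    have hFθ₁ : F (n : ℤ) θ₁ = 1 := by
      rw [hθ₁, map_smul, map_sub, hFδ0, hFδπ]
      norm_num
    have hFν : F (n : ℤ) ν₀ = (r₀ : ℂ) * ((1 / 2 : ℂ) *
        (Complex.exp (-((n : ℂ) * α) * I) + Complex.exp (-((n : ℂ) * β) * I))) := by
      rw [hν₀, map_add, map_smul, map_mul, map_mul, hFθ₀, hFθ₁, mul_zero, mul_one,
        smul_eq_mul, hρ, map_smul, map_add, hF, hF, smul_eq_mul]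
      push_cast
      ring
    rw [dist_eq_norm]
    have hd : zz - F (n : ℤ) ν₀ = ((r₀ : ℂ) / 2) *
        ((Complex.exp ((sa : ℂ) * I) - Complex.exp (-((n : ℂ) * α) * I))
          + (Complex.exp ((sb : ℂ) * I) - Complex.exp (-((n : ℂ) * β) * I))) := by
      have hw4 : w = (Complex.exp ((sa : ℂ) * I) + Complex.exp ((sb : ℂ) * I)) / 2 := by
        linear_combination (-1/2 : ℂ) * hw3
      rw [hzw, hFν, hw4]
      ring
    rw [hd, norm_mul]
    have hnr2 : ‖((r₀ : ℂ) / 2)‖ = r₀ / 2 := by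
      rw [norm_div, Complex.norm_real, Real.norm_eq_abs, _root_.abs_of_nonneg hr0]
      norm_num
    rw [hnr2]
    have hbound : ‖(Complex.exp ((sa : ℂ) * I) - Complex.exp (-((n : ℂ) * α) * I))
        + (Complex.exp ((sb : ℂ) * I) - Complex.exp (-((n : ℂ) * β) * I))‖ ≤ 2 * ε' := by
      calc ‖_ + _‖ ≤ ‖Complex.exp ((sa : ℂ) * I) - Complex.exp (-((n : ℂ) * α) * I)‖
            + ‖Complex.exp ((sb : ℂ) * I) - Complex.exp (-((n : ℂ) * β) * I)‖ := norm_add_le _ _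
        _ ≤ 2 * ε' := by
            rw [norm_sub_rev, norm_sub_rev (Complex.exp ((sb : ℂ) * I))]
            linarith
    have hfin : r₀ / 2 * (2 * ε') < ε := by
      have h1 : ε' ≤ ε / (r₀ + 1) := min_le_left _ _
      have h2 : r₀ / 2 * (2 * ε') = r₀ * ε' := by ring
      have h3 : r₀ * ε' ≤ r₀ * (ε / (r₀ + 1)) := mul_le_mul_of_nonneg_left h1 hr0
      have h4 : r₀ * (ε / (r₀ + 1)) < ε := by
        rw [mul_div_assoc', div_lt_iff₀ (by positivity)]
        nlinarith
      linarith
    calc r₀ / 2 * ‖_‖ ≤ r₀ / 2 * (2 * ε') := by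
          apply mul_le_mul_of_nonneg_left hbound (by positivity)
      _ < ε := hfin
  constructor
  · exact Set.Subset.antisymm (fun x hx => hball (hs1 hx)) hclS
  · exact Set.Subset.antisymm (fun x hx => hs1 (hclS hx)) hball
end
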